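/- arXiv:1709.08472 — 4 statements merged into one kernel-verified Lean document; each statement's English description precedes it below -/
import Mathlib

section
/- Let E be a real Banach space, T > 0, and let S be a strongly continuous semigroup on E with M := sup_{t∈[0,T]} ‖S(t)‖_{L(E)} < ∞. Let α ∈ (0,1) and let f : [0,T] → E be strongly measurable and essentially bounded. Then for every t ∈ [0,T] the deterministic factorization formula holds: ∫₀ᵗ S(t−r) f(r) dr = (sin(πα)/π) ∫₀ᵗ (t−s)^{α−1} S(t−s) (∫₀ˢ (s−r)^{−α} S(s−r) f(r) dr) ds, where all integrals are Bochner integrals and both sides are well defined. -/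
open MeasureTheory Set Real

lemma aux_jcont {E : Type*} [NormedAddCommGroup E] [NormedSpace ℝ E] [CompleteSpace E]
    (S : ℝ → E →L[ℝ] E) (hScont : ∀ x : E, Continuous fun t : ℝ => S t x) :
    Continuous fun p : ℝ × E => S p.1 p.2 := by
  rw [continuous_iff_continuousAt]
  rintro ⟨u₀, x₀⟩
  -- local uniform bound via Banach-Steinhaus
  have hptw : ∀ x : E, ∃ C, ∀ i : Icc (u₀ - 1) (u₀ + 1), ‖S i x‖ ≤ C := by
    intro x
    obtain ⟨C, hC⟩ := (isCompact_Icc (a := u₀ - 1) (b := u₀ + 1)).exists_bound_of_continuousOn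
      (f := fun t => S t x) (hScont x).continuousOn
    exact ⟨C, fun i => hC i i.2⟩
  obtain ⟨C, hC⟩ := banach_steinhaus hptw
  have hC0 : ∀ u ∈ Icc (u₀ - 1) (u₀ + 1), ‖S u‖ ≤ C := fun u hu => hC ⟨u, hu⟩
  rw [ContinuousAt, tendsto_iff_norm_sub_tendsto_zero]
  have hbnd : ∀ᶠ p : ℝ × E in nhds (u₀, x₀),
      ‖S p.1 p.2 - S u₀ x₀‖ ≤ C * ‖p.2 - x₀‖ + ‖S p.1 x₀ - S u₀ x₀‖ := by
    have hnb : Icc (u₀ - 1) (u₀ + 1) ∈ nhds u₀ := Icc_mem_nhds (by linarith) (by linarith)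
    filter_upwards [(continuous_fst.tendsto _).eventually hnb] with p hp
    have : S p.1 p.2 - S u₀ x₀ = S p.1 (p.2 - x₀) + (S p.1 x₀ - S u₀ x₀) := by
      rw [map_sub]; abel
    rw [this]
    refine (norm_add_le _ _).trans (add_le_add ?_ le_rfl)
    exact ((S p.1).le_opNorm _).trans (mul_le_mul_of_nonneg_right (hC0 _ hp) (norm_nonneg _))
  have hlim : Filter.Tendsto (fun p : ℝ × E => C * ‖p.2 - x₀‖ + ‖S p.1 x₀ - S u₀ x₀‖)
      (nhds (u₀, x₀)) (nhds 0) := by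
    have h1 : Filter.Tendsto (fun p : ℝ × E => C * ‖p.2 - x₀‖) (nhds (u₀, x₀))
        (nhds (C * ‖x₀ - x₀‖)) :=
      (continuous_const.mul ((continuous_snd.sub continuous_const).norm)).tendsto _
    have h2 : Filter.Tendsto (fun p : ℝ × E => ‖S p.1 x₀ - S u₀ x₀‖) (nhds (u₀, x₀)) (nhds 0) := by
      have h3 : Filter.Tendsto (fun p : ℝ × E => S p.1 x₀) (nhds (u₀, x₀)) (nhds (S u₀ x₀)) :=
        ((hScont x₀).tendsto u₀).comp (continuous_fst.tendsto (u₀, x₀))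
      rw [tendsto_iff_norm_sub_tendsto_zero] at h3
      exact h3
    simpa using h1.add h2
  exact squeeze_zero' (Filter.Eventually.of_forall fun p => norm_nonneg _) hbnd hlim

lemma aux_beta {α : ℝ} (hα : α ∈ Ioo (0:ℝ) 1) :
    ∫ u in (0:ℝ)..1, u ^ (-α) * (1 - u) ^ (α - 1) = π / Real.sin (π * α) := by
  have h1 : (0:ℝ) < 1 - α := by linarith [hα.2]
  have key := Complex.Gamma_mul_Gamma_eq_betaIntegral
    (s := ((1 - α : ℝ) : ℂ)) (t := ((α : ℝ) : ℂ))
    (by simpa using h1) (by simpa using hα.1)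
  have hsum : ((1 - α : ℝ) : ℂ) + ((α : ℝ) : ℂ) = 1 := by push_cast; ring
  rw [hsum, Complex.Gamma_one, one_mul] at key
  have hcast : Complex.betaIntegral ((1 - α : ℝ) : ℂ) ((α : ℝ) : ℂ) =
      ((∫ u in (0:ℝ)..1, u ^ (-α) * (1 - u) ^ (α - 1) : ℝ) : ℂ) := by
    rw [Complex.betaIntegral, ← intervalIntegral.integral_ofReal]
    refine intervalIntegral.integral_congr fun x hx => ?_
    rw [uIcc_of_le zero_le_one] at hx
    rw [Complex.ofReal_mul, Complex.ofReal_cpow hx.1, Complex.ofReal_cpow (by linarith [hx.2] : (0:ℝ) ≤ 1 - x)]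
    push_cast
    norm_num
  rw [hcast, Complex.Gamma_ofReal, Complex.Gamma_ofReal, ← Complex.ofReal_mul] at key
  have := Complex.ofReal_inj.mp key.symm
  rw [this, mul_comm, Real.Gamma_mul_Gamma_one_sub]

lemma aux_slice {α : ℝ} (hα : α ∈ Ioo (0:ℝ) 1) {r t : ℝ} (hrt : r < t) :
    ∫ s in Ioc r t, (t - s) ^ (α - 1) * (s - r) ^ (-α) = π / Real.sin (π * α) := by
  have h0 : (0:ℝ) < t - r := by linarith
  rw [← intervalIntegral.integral_of_le hrt.le]
  have hsub := intervalIntegral.smul_integral_comp_mul_add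
    (a := (0:ℝ)) (b := 1)
    (fun s => (t - s) ^ (α - 1) * (s - r) ^ (-α)) (t - r) r
  rw [mul_zero, zero_add, mul_one, sub_add_cancel] at hsub
  rw [← hsub]
  have hcongr : ∫ u in (0:ℝ)..1,
      (t - ((t - r) * u + r)) ^ (α - 1) * ((t - r) * u + r - r) ^ (-α)
      = ∫ u in (0:ℝ)..1, ((t - r) ^ (α - 1) * (t - r) ^ (-α)) * (u ^ (-α) * (1 - u) ^ (α - 1)) := by
    refine intervalIntegral.integral_congr fun u hu => ?_
    rw [uIcc_of_le zero_le_one] at hu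
    have e1 : t - ((t - r) * u + r) = (t - r) * (1 - u) := by ring
    have e2 : (t - r) * u + r - r = (t - r) * u := by ring
    rw [e1, e2, Real.mul_rpow h0.le (by linarith [hu.2]), Real.mul_rpow h0.le hu.1]
    ring
  rw [hcongr, intervalIntegral.integral_const_mul, aux_beta hα, smul_eq_mul]
  rw [show (t - r) * ((t - r) ^ (α - 1) * (t - r) ^ (-α) * (π / Real.sin (π * α)))
      = ((t - r) ^ (1:ℝ) * ((t - r) ^ (α - 1) * (t - r) ^ (-α))) * (π / Real.sin (π * α)) by
    rw [Real.rpow_one]; ring]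
  rw [← Real.rpow_add h0, ← Real.rpow_add h0]
  rw [show (1:ℝ) + (α - 1 + -α) = 0 by ring, Real.rpow_zero, one_mul]

lemma aux_refl_rpow {β : ℝ} (hβ : -1 < β) (a : ℝ) :
    IntegrableOn (fun x => (a - x) ^ β) (Ioc 0 a) := by
  rcases le_or_gt a 0 with h | h
  · rw [Ioc_eq_empty (by exact fun hh => absurd hh (not_lt.mpr h))]
    exact integrableOn_empty
  · have h1 : IntervalIntegrable (fun x : ℝ => x ^ β) volume 0 a :=
      intervalIntegral.intervalIntegrable_rpow' hβ
    have h2 := (h1.comp_sub_left a)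
    rw [sub_zero, sub_self] at h2
    rw [← intervalIntegrable_iff_integrableOn_Ioc_of_le h.le]
    exact h2.symm

-- value of reflected integral over Ioc
lemma aux_refl_val (a : ℝ) (f : ℝ → ℝ) :
    ∫ x in Ioc 0 a, f (a - x) = ∫ x in Ioc 0 a, f x := by
  rcases le_or_gt a 0 with h | h
  · simp [Ioc_eq_empty (not_lt.mpr h)]
  · rw [← intervalIntegral.integral_of_le h.le, ← intervalIntegral.integral_of_le h.le,
      intervalIntegral.integral_comp_sub_left f a, sub_zero, sub_self]

/-- The deterministic factorization formula
`∫₀ᵗ S(t-r) f(r) dr = (sin(πα)/π) ∫₀ᵗ (t-s)^(α-1) S(t-s) (∫₀ˢ (s-r)^(-α) S(s-r) f(r) dr) ds`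
for a strongly continuous semigroup `S` on a Banach space `E`, `α ∈ (0,1)` and
strongly measurable, essentially bounded `f : [0,T] → E`; all Bochner integrals
involved are well defined. -/
theorem stmt_2
    {E : Type*} [NormedAddCommGroup E] [NormedSpace ℝ E] [CompleteSpace E]
    (T : ℝ) (hT : 0 < T)
    (S : ℝ → E →L[ℝ] E)
    (hS0 : S 0 = ContinuousLinearMap.id ℝ E)
    (hSadd : ∀ s t : ℝ, 0 ≤ s → 0 ≤ t → S (t + s) = (S t).comp (S s))
    (hScont : ∀ x : E, Continuous fun t : ℝ => S t x)
    (M : ℝ) (hM : ∀ t ∈ Icc (0 : ℝ) T, ‖S t‖ ≤ M)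
    (α : ℝ) (hα : α ∈ Ioo (0 : ℝ) 1)
    (f : ℝ → E)
    (hf : AEStronglyMeasurable f (volume.restrict (Ioc (0 : ℝ) T)))
    (B : ℝ) (hfB : ∀ᵐ r ∂volume.restrict (Ioc (0 : ℝ) T), ‖f r‖ ≤ B) :
    ∀ t ∈ Icc (0 : ℝ) T,
      -- the left-hand side is well defined
      IntegrableOn (fun r => S (t - r) (f r)) (Ioc (0 : ℝ) t) ∧
      -- the inner integrals are well defined
      (∀ s ∈ Ioc (0 : ℝ) t,
        IntegrableOn (fun r => (s - r) ^ (-α) • S (s - r) (f r)) (Ioc (0 : ℝ) s)) ∧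
      -- the outer integral is well defined
      IntegrableOn (fun s => (t - s) ^ (α - 1) •
          S (t - s) (∫ r in Ioc (0 : ℝ) s, (s - r) ^ (-α) • S (s - r) (f r)))
        (Ioc (0 : ℝ) t) ∧
      -- the factorization formula
      (∫ r in Ioc (0 : ℝ) t, S (t - r) (f r)) =
        (Real.sin (π * α) / π) •
          ∫ s in Ioc (0 : ℝ) t, (t - s) ^ (α - 1) •
            S (t - s) (∫ r in Ioc (0 : ℝ) s, (s - r) ^ (-α) • S (s - r) (f r)) := by
  intro t ht
  have hM0 : 0 ≤ M := le_trans (norm_nonneg _) (hM 0 ⟨le_refl _, hT.le⟩)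
  have hα1 : (-1:ℝ) < -α := by linarith [hα.2]
  have hα2 : (-1:ℝ) < α - 1 := by linarith [hα.1]
  -- replace f by an everywhere-bounded strongly measurable version g
  set B' : ℝ := max B 0 with hB'def
  have hB'0 : 0 ≤ B' := le_max_right _ _
  set g₀ : ℝ → E := hf.mk f with hg₀def
  have hg₀ : StronglyMeasurable g₀ := hf.stronglyMeasurable_mk
  set g : ℝ → E := ({r : ℝ | ‖g₀ r‖ ≤ B'}).indicator g₀ with hgdef
  have hmeasset : MeasurableSet {r : ℝ | ‖g₀ r‖ ≤ B'} :=
    measurableSet_le hg₀.norm.measurable measurable_const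
  have hg : StronglyMeasurable g := hg₀.indicator hmeasset
  have hgB : ∀ r, ‖g r‖ ≤ B' := by
    intro r
    rw [hgdef]
    by_cases h : r ∈ {r : ℝ | ‖g₀ r‖ ≤ B'}
    · rw [indicator_of_mem h]; exact h
    · rw [indicator_of_notMem h]; simpa using hB'0
  have hfg : f =ᵐ[volume.restrict (Ioc (0:ℝ) T)] g := by
    filter_upwards [hf.ae_eq_mk, hfB] with r h1 h2
    have h1' : f r = g₀ r := h1
    have : r ∈ {r : ℝ | ‖g₀ r‖ ≤ B'} := by
      simp only [mem_setOf_eq, ← h1']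
      exact le_trans h2 (le_max_left _ _)
    rw [hgdef, indicator_of_mem this, ← h1']
  have hfg_s : ∀ s : ℝ, s ≤ T → f =ᵐ[volume.restrict (Ioc (0:ℝ) s)] g := fun s hs =>
    ae_restrict_of_ae_restrict_of_subset (Ioc_subset_Ioc_right hs) hfg
  have hj : Continuous fun p : ℝ × E => S p.1 p.2 := aux_jcont S hScont
  -- bound for S a (g r)
  have hSB : ∀ a ∈ Icc (0:ℝ) T, ∀ r : ℝ, ‖S a (g r)‖ ≤ M * B' := fun a ha r =>
    ((S a).le_opNorm _).trans (mul_le_mul (hM a ha) (hgB r) (norm_nonneg _) hM0)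
  rcases eq_or_lt_of_le ht.1 with h0 | h0
  · refine ⟨?_, ?_, ?_, ?_⟩ <;> simp [← h0]
  -- now 0 < t
  have htT : t ≤ T := ht.2
  have hker : ∀ c : ℝ, StronglyMeasurable fun r : ℝ => S (c - r) (g r) := fun c =>
    hj.comp_stronglyMeasurable
      (((measurable_const.sub measurable_id).stronglyMeasurable).prodMk hg)
  have hfin : volume (Ioc (0:ℝ) t) < ⊤ := measure_Ioc_lt_top
  -- statement 1 for g
  have hst1g : IntegrableOn (fun r => S (t - r) (g r)) (Ioc (0:ℝ) t) := by
    refine Integrable.mono' (g := fun _ => M * B') ?_ (hker t).aestronglyMeasurable ?_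
    · exact (integrableOn_const_iff).mpr (Or.inr hfin)
    · filter_upwards [ae_restrict_mem measurableSet_Ioc] with r hr
      exact hSB (t - r) ⟨by linarith [hr.2], by linarith [hr.1, htT]⟩ r
  have hst1 : IntegrableOn (fun r => S (t - r) (f r)) (Ioc (0:ℝ) t) := by
    refine hst1g.congr ?_
    filter_upwards [hfg_s t htT] with r hr
    rw [hr]
  -- statement 2 for g
  have hst2g : ∀ s ∈ Ioc (0:ℝ) t,
      IntegrableOn (fun r => (s - r) ^ (-α) • S (s - r) (g r)) (Ioc (0:ℝ) s) := by
    intro s hs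
    refine Integrable.mono' (g := fun r => (M * B') * (s - r) ^ (-α))
      ((aux_refl_rpow hα1 s).const_mul _) ?_ ?_
    · exact (Measurable.aestronglyMeasurable
        (show Measurable fun r : ℝ => (s - r) ^ (-α) by fun_prop)).smul
        (hker s).aestronglyMeasurable
    · filter_upwards [ae_restrict_mem measurableSet_Ioc] with r hr
      rw [norm_smul, Real.norm_eq_abs,
        abs_of_nonneg (Real.rpow_nonneg (by linarith [hr.2] : (0:ℝ) ≤ s - r) _)]
      calc (s - r) ^ (-α) * ‖S (s - r) (g r)‖
          ≤ (s - r) ^ (-α) * (M * B') := mul_le_mul_of_nonneg_left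
            (hSB (s - r) ⟨by linarith [hr.2], by linarith [hr.1, hs.2, htT]⟩ r)
            (Real.rpow_nonneg (by linarith [hr.2]) _)
        _ = (M * B') * (s - r) ^ (-α) := mul_comm _ _
  have hst2 : ∀ s ∈ Ioc (0:ℝ) t,
      IntegrableOn (fun r => (s - r) ^ (-α) • S (s - r) (f r)) (Ioc (0:ℝ) s) :=
    by
    intro s hs
    refine (hst2g s hs).congr ?_
    filter_upwards [hfg_s s (hs.2.trans htT)] with r hr
    rw [hr]
  -- pointwise bound for the inner integrand
  have hptb : ∀ s r : ℝ, 0 < r → r ≤ s → s ≤ t →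
      ‖(s - r) ^ (-α) • S (s - r) (g r)‖ ≤ (M * B') * (s - r) ^ (-α) := by
    intro s r h1 h2 h3
    rw [norm_smul, Real.norm_eq_abs,
      abs_of_nonneg (Real.rpow_nonneg (by linarith : (0:ℝ) ≤ s - r) _)]
    calc (s - r) ^ (-α) * ‖S (s - r) (g r)‖
        ≤ (s - r) ^ (-α) * (M * B') := mul_le_mul_of_nonneg_left
          (hSB (s - r) ⟨by linarith, by linarith⟩ r)
          (Real.rpow_nonneg (by linarith) _)
      _ = (M * B') * (s - r) ^ (-α) := mul_comm _ _
  -- constant Cα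
  set Cα : ℝ := ∫ x in Ioc (0:ℝ) t, x ^ (-α) with hCαdef
  have hIoc_int : IntegrableOn (fun x : ℝ => x ^ (-α)) (Ioc 0 t) := by
    have := intervalIntegral.intervalIntegrable_rpow' (a := 0) (b := t) hα1
    rwa [intervalIntegrable_iff_integrableOn_Ioc_of_le h0.le] at this
  have hCα0 : 0 ≤ Cα := setIntegral_nonneg measurableSet_Ioc
    (fun x hx => Real.rpow_nonneg hx.1.le _)
  have hCαb : ∀ s : ℝ, 0 < s → s ≤ t →
      ∫ r in Ioc (0:ℝ) s, (s - r) ^ (-α) ≤ Cα := by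
    intro s h1 h2
    rw [aux_refl_val s (fun x => x ^ (-α))]
    refine setIntegral_mono_set hIoc_int ?_
      (HasSubset.Subset.eventuallyLE (Ioc_subset_Ioc_right h2))
    filter_upwards [ae_restrict_mem measurableSet_Ioc] with x hx
    exact Real.rpow_nonneg hx.1.le _
  -- norm bound for the inner integral G
  set G : ℝ → E := fun s => ∫ r in Ioc (0:ℝ) s, (s - r) ^ (-α) • S (s - r) (g r) with hGdef
  have hGnorm : ∀ s ∈ Ioc (0:ℝ) t, ‖G s‖ ≤ (M * B') * Cα := by
    intro s hs
    calc ‖G s‖ ≤ ∫ r in Ioc (0:ℝ) s, ‖(s - r) ^ (-α) • S (s - r) (g r)‖ :=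
          norm_integral_le_integral_norm _
      _ ≤ ∫ r in Ioc (0:ℝ) s, (M * B') * (s - r) ^ (-α) := by
          refine integral_mono_of_nonneg ?_ ((aux_refl_rpow hα1 s).const_mul _) ?_
          · filter_upwards with r using norm_nonneg _
          · filter_upwards [ae_restrict_mem measurableSet_Ioc] with r hr
            exact hptb s r hr.1 hr.2 hs.2
      _ = (M * B') * ∫ r in Ioc (0:ℝ) s, (s - r) ^ (-α) := integral_const_mul _ _
      _ ≤ (M * B') * Cα := mul_le_mul_of_nonneg_left (hCαb s hs.1 hs.2)
          (mul_nonneg hM0 hB'0)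
  -- the double-variable functions
  set μ : Measure ℝ := volume.restrict (Ioc (0:ℝ) t) with hμdef
  set F : ℝ × ℝ → E := ({p : ℝ × ℝ | p.2 < p.1}).indicator
      (fun p => ((t - p.1) ^ (α - 1) * (p.1 - p.2) ^ (-α)) • S (t - p.2) (g p.2)) with hFdef
  set F₀ : ℝ × ℝ → E := ({p : ℝ × ℝ | p.2 < p.1}).indicator
      (fun p => (p.1 - p.2) ^ (-α) • S (p.1 - p.2) (g p.2)) with hF₀def
  have hA : MeasurableSet {p : ℝ × ℝ | p.2 < p.1} :=
    measurableSet_lt measurable_snd measurable_fst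
  have hFm : StronglyMeasurable F := by
    refine StronglyMeasurable.indicator (StronglyMeasurable.smul ?_ ?_) hA
    · exact (show Measurable fun p : ℝ × ℝ => (t - p.1) ^ (α - 1) * (p.1 - p.2) ^ (-α)
        by fun_prop).stronglyMeasurable
    · exact hj.comp_stronglyMeasurable
        (((measurable_const.sub measurable_snd).stronglyMeasurable).prodMk
          (hg.comp_measurable measurable_snd))
  have hF₀m : StronglyMeasurable F₀ := by
    refine StronglyMeasurable.indicator (StronglyMeasurable.smul ?_ ?_) hA
    · exact (show Measurable fun p : ℝ × ℝ => (p.1 - p.2) ^ (-α)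
        by fun_prop).stronglyMeasurable
    · exact hj.comp_stronglyMeasurable
        (((measurable_fst.sub measurable_snd).stronglyMeasurable).prodMk
          (hg.comp_measurable measurable_snd))
  -- identification of slices
  have hcurry : ∀ s : ℝ, (fun r => F (s, r)) =
      (Iio s).indicator (fun r => ((t - s) ^ (α - 1) * (s - r) ^ (-α)) • S (t - r) (g r)) := by
    intro s
    funext r
    rw [hFdef]
    by_cases h : r < s
    · rw [indicator_of_mem (show (s, r) ∈ {p : ℝ × ℝ | p.2 < p.1} from h),
        indicator_of_mem (mem_Iio.mpr h)]
    · rw [indicator_of_notMem (show (s, r) ∉ {p : ℝ × ℝ | p.2 < p.1} from h),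
        indicator_of_notMem (show r ∉ Iio s from fun hh => h (mem_Iio.mp hh))]
  have hcurry₀ : ∀ s : ℝ, (fun r => F₀ (s, r)) =
      (Iio s).indicator (fun r => (s - r) ^ (-α) • S (s - r) (g r)) := by
    intro s
    funext r
    rw [hF₀def]
    by_cases h : r < s
    · rw [indicator_of_mem (show (s, r) ∈ {p : ℝ × ℝ | p.2 < p.1} from h),
        indicator_of_mem (mem_Iio.mpr h)]
    · rw [indicator_of_notMem (show (s, r) ∉ {p : ℝ × ℝ | p.2 < p.1} from h),
        indicator_of_notMem (show r ∉ Iio s from fun hh => h (mem_Iio.mp hh))]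
  have hseteq : ∀ s : ℝ, 0 < s → s ≤ t → Iio s ∩ Ioc (0:ℝ) t = Ioo 0 s := by
    intro s h1 h2
    ext x
    simp only [mem_inter_iff, mem_Iio, mem_Ioc, mem_Ioo]
    constructor
    · rintro ⟨hx, hx2, _⟩; exact ⟨hx2, hx⟩
    · rintro ⟨hx1, hx2⟩; exact ⟨hx2, hx1, by linarith⟩
  -- slice integrability of F
  have hFsliceInt : ∀ s ∈ Ioc (0:ℝ) t, Integrable (fun r => F (s, r)) μ := by
    intro s hs
    rw [hcurry s, hμdef, integrable_indicator_iff measurableSet_Iio, IntegrableOn,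
      Measure.restrict_restrict measurableSet_Iio, hseteq s hs.1 hs.2]
    refine Integrable.mono' (g := fun r => ((M * B') * (t - s) ^ (α - 1)) * (s - r) ^ (-α))
      (((aux_refl_rpow hα1 s).mono_set Ioo_subset_Ioc_self).const_mul _) ?_ ?_
    · exact ((show Measurable fun r : ℝ => (t - s) ^ (α - 1) * (s - r) ^ (-α)
        by fun_prop).aestronglyMeasurable).smul (hker t).aestronglyMeasurable
    · filter_upwards [ae_restrict_mem measurableSet_Ioo] with r hr
      have h1 : (0:ℝ) ≤ (t - s) ^ (α - 1) := Real.rpow_nonneg (by linarith [hs.2]) _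
      have h2 : (0:ℝ) ≤ (s - r) ^ (-α) := Real.rpow_nonneg (by linarith [hr.2]) _
      rw [norm_smul, Real.norm_eq_abs, abs_mul, abs_of_nonneg h1, abs_of_nonneg h2]
      calc (t - s) ^ (α - 1) * (s - r) ^ (-α) * ‖S (t - r) (g r)‖
          ≤ (t - s) ^ (α - 1) * (s - r) ^ (-α) * (M * B') := mul_le_mul_of_nonneg_left
            (hSB (t - r) ⟨by linarith [hr.2, hs.2], by linarith [hr.1, htT]⟩ r)
            (mul_nonneg h1 h2)
        _ = ((M * B') * (t - s) ^ (α - 1)) * (s - r) ^ (-α) := by ring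
  -- bound for the integral of the norm of a slice
  have hFnormb : ∀ s ∈ Ioc (0:ℝ) t,
      ∫ r, ‖F (s, r)‖ ∂μ ≤ ((M * B') * Cα) * (t - s) ^ (α - 1) := by
    intro s hs
    have hnormeq : (fun r => ‖F (s, r)‖) = (Iio s).indicator
        (fun r => ‖((t - s) ^ (α - 1) * (s - r) ^ (-α)) • S (t - r) (g r)‖) := by
      funext r
      rw [congrFun (hcurry s) r]
      exact norm_indicator_eq_indicator_norm _ _
    rw [hnormeq, hμdef, integral_indicator measurableSet_Iio,
      Measure.restrict_restrict measurableSet_Iio, hseteq s hs.1 hs.2]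
    have h1 : (0:ℝ) ≤ (t - s) ^ (α - 1) := Real.rpow_nonneg (by linarith [hs.2]) _
    calc ∫ r in Ioo (0:ℝ) s, ‖((t - s) ^ (α - 1) * (s - r) ^ (-α)) • S (t - r) (g r)‖
        ≤ ∫ r in Ioo (0:ℝ) s, ((M * B') * (t - s) ^ (α - 1)) * (s - r) ^ (-α) := by
          refine integral_mono_of_nonneg ?_
            (((aux_refl_rpow hα1 s).mono_set Ioo_subset_Ioc_self).const_mul _) ?_
          · filter_upwards with r using norm_nonneg _
          · filter_upwards [ae_restrict_mem measurableSet_Ioo] with r hr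
            have h2 : (0:ℝ) ≤ (s - r) ^ (-α) := Real.rpow_nonneg (by linarith [hr.2]) _
            rw [norm_smul, Real.norm_eq_abs, abs_mul, abs_of_nonneg h1, abs_of_nonneg h2]
            calc (t - s) ^ (α - 1) * (s - r) ^ (-α) * ‖S (t - r) (g r)‖
                ≤ (t - s) ^ (α - 1) * (s - r) ^ (-α) * (M * B') := mul_le_mul_of_nonneg_left
                  (hSB (t - r) ⟨by linarith [hr.2, hs.2], by linarith [hr.1, htT]⟩ r)
                  (mul_nonneg h1 h2)
              _ = ((M * B') * (t - s) ^ (α - 1)) * (s - r) ^ (-α) := by ring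
      _ = ((M * B') * (t - s) ^ (α - 1)) * ∫ r in Ioo (0:ℝ) s, (s - r) ^ (-α) :=
          integral_const_mul _ _
      _ ≤ ((M * B') * (t - s) ^ (α - 1)) * Cα := by
          refine mul_le_mul_of_nonneg_left ?_ (mul_nonneg (mul_nonneg hM0 hB'0) h1)
          rw [← integral_Ioc_eq_integral_Ioo]
          exact hCαb s hs.1 hs.2
      _ = ((M * B') * Cα) * (t - s) ^ (α - 1) := by ring
  -- integrability of F on the product
  have hFint : Integrable F (μ.prod μ) := by
    refine (integrable_prod_iff hFm.aestronglyMeasurable).mpr ⟨?_, ?_⟩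
    · have : ∀ᵐ s ∂μ, s ∈ Ioc (0:ℝ) t := by
        rw [hμdef]; exact ae_restrict_mem measurableSet_Ioc
      filter_upwards [this] with s hs
      exact hFsliceInt s hs
    · refine Integrable.mono' (g := fun s => ((M * B') * Cα) * (t - s) ^ (α - 1))
        ?_ (hFm.norm.integral_prod_right'.aestronglyMeasurable) ?_
      · exact ((aux_refl_rpow hα2 t).const_mul _)
      · have : ∀ᵐ s ∂μ, s ∈ Ioc (0:ℝ) t := by
          rw [hμdef]; exact ae_restrict_mem measurableSet_Ioc
        filter_upwards [this] with s hs
        rw [Real.norm_eq_abs, abs_of_nonneg (integral_nonneg fun r => norm_nonneg _)]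
        exact hFnormb s hs
  have hswap : ∫ s, (∫ r, F (s, r) ∂μ) ∂μ = ∫ r, (∫ s, F (s, r) ∂μ) ∂μ :=
    integral_integral_swap (by exact hFint)
  -- evaluation of the slice integrals, s first
  have hE1 : ∀ s ∈ Ioc (0:ℝ) t, ∫ r, F (s, r) ∂μ = (t - s) ^ (α - 1) • S (t - s) (G s) := by
    intro s hs
    rw [hcurry s, hμdef, integral_indicator measurableSet_Iio,
      Measure.restrict_restrict measurableSet_Iio, hseteq s hs.1 hs.2,
      ← integral_Ioc_eq_integral_Ioo]
    have hcongr : ∀ r ∈ Ioc (0:ℝ) s,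
        ((t - s) ^ (α - 1) * (s - r) ^ (-α)) • S (t - r) (g r)
          = (t - s) ^ (α - 1) • S (t - s) ((s - r) ^ (-α) • S (s - r) (g r)) := by
      intro r hr
      have hsg : S (t - r) = (S (t - s)).comp (S (s - r)) := by
        have := hSadd (s - r) (t - s) (by linarith [hr.2]) (by linarith [hs.2])
        rw [show t - s + (s - r) = t - r by ring] at this
        exact this
      rw [hsg, mul_smul]
      simp only [ContinuousLinearMap.coe_comp', Function.comp_apply, _root_.map_smul]
    rw [setIntegral_congr_fun measurableSet_Ioc hcongr, integral_smul,
      ContinuousLinearMap.integral_comp_comm _ (hst2g s hs)]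
  -- evaluation of the slice integrals, r first
  have hE2 : ∀ r : ℝ, 0 < r → r < t →
      ∫ s, F (s, r) ∂μ = (π / Real.sin (π * α)) • S (t - r) (g r) := by
    intro r h1 h2
    have hcurry' : (fun s => F (s, r)) = (Ioi r).indicator
        (fun s => ((t - s) ^ (α - 1) * (s - r) ^ (-α)) • S (t - r) (g r)) := by
      funext s
      rw [hFdef]
      by_cases h : r < s
      · rw [indicator_of_mem (show (s, r) ∈ {p : ℝ × ℝ | p.2 < p.1} from h),
          indicator_of_mem (mem_Ioi.mpr h)]
      · rw [indicator_of_notMem (show (s, r) ∉ {p : ℝ × ℝ | p.2 < p.1} from h),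
          indicator_of_notMem (show s ∉ Ioi r from fun hh => h (mem_Ioi.mp hh))]
    have hset2 : Ioi r ∩ Ioc (0:ℝ) t = Ioc r t := by
      ext x
      simp only [mem_inter_iff, mem_Ioi, mem_Ioc]
      constructor
      · rintro ⟨hx1, _, hx3⟩; exact ⟨hx1, hx3⟩
      · rintro ⟨hx1, hx3⟩; exact ⟨hx1, by linarith, hx3⟩
    rw [hcurry', hμdef, integral_indicator measurableSet_Ioi,
      Measure.restrict_restrict measurableSet_Ioi, hset2]
    rw [show (fun s => ((t - s) ^ (α - 1) * (s - r) ^ (-α)) • S (t - r) (g r))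
        = fun s => ((t - s) ^ (α - 1) * (s - r) ^ (-α)) • S (t - r) (g r) from rfl]
    rw [integral_smul_const, aux_slice hα h2]
  -- a.e. r ≠ t
  have h_ne : ∀ᵐ r ∂μ, r ≠ (t:ℝ) := by
    rw [hμdef]
    refine ae_restrict_of_ae ?_
    rw [ae_iff]
    have : {a : ℝ | ¬a ≠ t} = {t} := by ext x; simp
    rw [this]
    exact measure_singleton t
  have hLHSswap : ∫ s, (∫ r, F (s, r) ∂μ) ∂μ
      = ∫ s in Ioc (0:ℝ) t, (t - s) ^ (α - 1) • S (t - s) (G s) := by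
    rw [hμdef]
    exact setIntegral_congr_fun measurableSet_Ioc fun s hs => hE1 s hs
  have hRHSswap : ∫ r, (∫ s, F (s, r) ∂μ) ∂μ
      = (π / Real.sin (π * α)) • ∫ r in Ioc (0:ℝ) t, S (t - r) (g r) := by
    rw [← integral_smul]
    refine integral_congr_ae ?_
    have hmem : ∀ᵐ r ∂μ, r ∈ Ioc (0:ℝ) t := by
      rw [hμdef]; exact ae_restrict_mem measurableSet_Ioc
    filter_upwards [hmem, h_ne] with r hr hne
    exact hE2 r hr.1 (lt_of_le_of_ne hr.2 hne)
  -- measurability of G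
  have hGm : AEStronglyMeasurable G μ := by
    have h1 : AEStronglyMeasurable (fun s => ∫ r, F₀ (s, r) ∂μ) μ :=
      (hF₀m.aestronglyMeasurable (μ := μ.prod μ)).integral_prod_right'
    refine h1.congr ?_
    have hmem : ∀ᵐ s ∂μ, s ∈ Ioc (0:ℝ) t := by
      rw [hμdef]; exact ae_restrict_mem measurableSet_Ioc
    filter_upwards [hmem] with s hs
    rw [hcurry₀ s, hμdef, integral_indicator measurableSet_Iio,
      Measure.restrict_restrict measurableSet_Iio, hseteq s hs.1 hs.2,
      ← integral_Ioc_eq_integral_Ioo]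
  -- outer integrability for g
  have hOuterg : IntegrableOn (fun s => (t - s) ^ (α - 1) • S (t - s) (G s)) (Ioc (0:ℝ) t) := by
    refine Integrable.mono' (g := fun s => (M * ((M * B') * Cα)) * (t - s) ^ (α - 1))
      ((aux_refl_rpow hα2 t).const_mul _) ?_ ?_
    · exact ((show Measurable fun s : ℝ => (t - s) ^ (α - 1)
        by fun_prop).aestronglyMeasurable).smul
        (hj.comp_aestronglyMeasurable
          (((measurable_const.sub measurable_id).aestronglyMeasurable).prodMk hGm))
    · filter_upwards [ae_restrict_mem measurableSet_Ioc] with s hs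
      have h1 : (0:ℝ) ≤ (t - s) ^ (α - 1) := Real.rpow_nonneg (by linarith [hs.2]) _
      rw [norm_smul, Real.norm_eq_abs, abs_of_nonneg h1]
      calc (t - s) ^ (α - 1) * ‖S (t - s) (G s)‖
          ≤ (t - s) ^ (α - 1) * (M * ((M * B') * Cα)) := by
            refine mul_le_mul_of_nonneg_left ?_ h1
            refine ((S _).le_opNorm _).trans ?_
            exact mul_le_mul (hM _ ⟨by linarith [hs.2], by linarith [hs.1, htT]⟩)
              (hGnorm s hs) (norm_nonneg _) hM0
        _ = (M * ((M * B') * Cα)) * (t - s) ^ (α - 1) := mul_comm _ _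
  -- relating f and g versions of the inner integral
  have hGf : ∀ s ∈ Ioc (0:ℝ) t,
      (∫ r in Ioc (0:ℝ) s, (s - r) ^ (-α) • S (s - r) (f r)) = G s := by
    intro s hs
    refine integral_congr_ae ?_
    filter_upwards [hfg_s s (hs.2.trans htT)] with r hr
    rw [hr]
  have hst3 : IntegrableOn (fun s => (t - s) ^ (α - 1) • S (t - s)
      (∫ r in Ioc (0:ℝ) s, (s - r) ^ (-α) • S (s - r) (f r))) (Ioc (0:ℝ) t) := by
    refine hOuterg.congr ?_
    filter_upwards [ae_restrict_mem measurableSet_Ioc] with s hs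
    rw [hGf s hs]
  refine ⟨hst1, hst2, hst3, ?_⟩
  have hLHSeq : (∫ r in Ioc (0:ℝ) t, S (t - r) (f r)) = ∫ r in Ioc (0:ℝ) t, S (t - r) (g r) := by
    refine integral_congr_ae ?_
    filter_upwards [hfg_s t htT] with r hr
    rw [hr]
  have houter_eq : (∫ s in Ioc (0:ℝ) t, (t - s) ^ (α - 1) • S (t - s)
        (∫ r in Ioc (0:ℝ) s, (s - r) ^ (-α) • S (s - r) (f r)))
      = ∫ s in Ioc (0:ℝ) t, (t - s) ^ (α - 1) • S (t - s) (G s) := by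
    refine setIntegral_congr_fun measurableSet_Ioc fun s hs => ?_
    rw [hGf s hs]
  rw [hLHSeq, houter_eq]
  have hmain : (∫ s in Ioc (0:ℝ) t, (t - s) ^ (α - 1) • S (t - s) (G s))
      = (π / Real.sin (π * α)) • ∫ r in Ioc (0:ℝ) t, S (t - r) (g r) := by
    rw [← hLHSswap, hswap, hRHSswap]
  rw [hmain, smul_smul]
  have hsin : Real.sin (π * α) ≠ 0 := ne_of_gt (Real.sin_pos_of_pos_of_lt_pi
    (mul_pos Real.pi_pos hα.1) (mul_lt_of_lt_one_right Real.pi_pos hα.2))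
  rw [show Real.sin (π * α) / π * (π / Real.sin (π * α)) = 1 by
    field_simp, one_smul]
end

section
/- Let E be a real Banach space, T > 0, and let S be a strongly continuous semigroup on E with M := sup_{t∈[0,T]} ‖S(t)‖_{L(E)} < ∞. Let F : E → E be continuous and K_F : (0,T) → [0,∞) measurable with ∫₀ᵀ K_F(r) dr < ∞ and ‖S(t)(F(x) − F(y))‖ ≤ K_F(t)‖x − y‖ for all t ∈ (0,T], x, y ∈ E. Fix x₀ ∈ E and define, for a bounded strongly measurable Y : [0,T] → E, the map M(Y)(t) := S(t)x₀ + ∫₀ᵗ S(t−r) F(Y(r)) dr. Then for every u > 0 and all bounded strongly measurable X, Y : [0,T] → E one has ‖M(X) − M(Y)‖_u ≤ (∫₀ᵀ e^{−ur} K_F(r) dr) ‖X − Y‖_u, where ‖Z‖_u := sup_{t∈[0,T]} e^{−ut} ‖Z(t)‖. -/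
open MeasureTheory Set Real

/-- The mild-solution map
`M(Y)(t) = S(t)x₀ + ∫₀ᵗ S(t-r) F(Y(r)) dr` is Lipschitz, with constant
`∫₀ᵀ e^(-ur) K_F(r) dr`, with respect to the exponentially weighted supremum
norm `‖Z‖_u = sup_{t∈[0,T]} e^(-ut) ‖Z(t)‖`. -/
theorem stmt_5
    {E : Type*} [NormedAddCommGroup E] [NormedSpace ℝ E] [CompleteSpace E]
    (T : ℝ) (hT : 0 < T)
    (S : ℝ → E →L[ℝ] E)
    (hS0 : S 0 = ContinuousLinearMap.id ℝ E)
    (hSadd : ∀ s t : ℝ, 0 ≤ s → 0 ≤ t → S (t + s) = (S t).comp (S s))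
    (hScont : ∀ x : E, Continuous fun t : ℝ => S t x)
    (M : ℝ) (hM : ∀ t ∈ Icc (0 : ℝ) T, ‖S t‖ ≤ M)
    (F : E → E) (hF : Continuous F)
    (K_F : ℝ → ℝ) (hKFm : Measurable K_F)
    (hKFnn : ∀ r ∈ Ioc (0 : ℝ) T, 0 ≤ K_F r)
    (hKFi : IntegrableOn K_F (Ioc (0 : ℝ) T))
    (hLip : ∀ t ∈ Ioc (0 : ℝ) T, ∀ x y : E, ‖S t (F x - F y)‖ ≤ K_F t * ‖x - y‖)
    (x₀ : E) (u : ℝ) (hu : 0 < u)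
    (X Y : ℝ → E)
    (hXm : AEStronglyMeasurable X (volume.restrict (Ioc (0 : ℝ) T)))
    (hYm : AEStronglyMeasurable Y (volume.restrict (Ioc (0 : ℝ) T)))
    (BX : ℝ) (hXb : ∀ t ∈ Icc (0 : ℝ) T, ‖X t‖ ≤ BX)
    (BY : ℝ) (hYb : ∀ t ∈ Icc (0 : ℝ) T, ‖Y t‖ ≤ BY) :
    (⨆ t ∈ Icc (0 : ℝ) T, Real.exp (-u * t) *
        ‖(S t x₀ + ∫ r in Ioc (0 : ℝ) t, S (t - r) (F (X r))) -
          (S t x₀ + ∫ r in Ioc (0 : ℝ) t, S (t - r) (F (Y r)))‖) ≤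
      (∫ r in Ioc (0 : ℝ) T, Real.exp (-u * r) * K_F r) *
        ⨆ t ∈ Icc (0 : ℝ) T, Real.exp (-u * t) * ‖X t - Y t‖ := by
  have hM0 : 0 ≤ M := le_trans (norm_nonneg _) (hM 0 ⟨le_refl 0, hT.le⟩)
  -- the weighted sup norm of X - Y
  set N : ℝ := ⨆ t ∈ Icc (0 : ℝ) T, Real.exp (-u * t) * ‖X t - Y t‖ with hNdef
  have hBdd : BddAbove (range fun t => ⨆ _ : t ∈ Icc (0 : ℝ) T,
      Real.exp (-u * t) * ‖X t - Y t‖) := by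
    refine ⟨max 0 (BX + BY), ?_⟩
    rintro _ ⟨t, rfl⟩
    refine Real.iSup_le (fun ht => le_trans ?_ (le_max_right _ _)) (le_max_left _ _)
    have h1 : Real.exp (-u * t) ≤ 1 := by
      rw [Real.exp_le_one_iff]
      nlinarith [ht.1, hu.le]
    have h2 : ‖X t - Y t‖ ≤ BX + BY :=
      (norm_sub_le _ _).trans (add_le_add (hXb t ht) (hYb t ht))
    calc Real.exp (-u * t) * ‖X t - Y t‖ ≤ 1 * (BX + BY) :=
          mul_le_mul h1 h2 (norm_nonneg _) one_pos.le
      _ = BX + BY := one_mul _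
  have hNle : ∀ r ∈ Icc (0 : ℝ) T, Real.exp (-u * r) * ‖X r - Y r‖ ≤ N := fun r hr =>
    le_ciSup_of_le hBdd r (by rw [ciSup_pos hr])
  have hN0 : 0 ≤ N :=
    le_trans (mul_nonneg (Real.exp_pos _).le (norm_nonneg _)) (hNle 0 ⟨le_rfl, hT.le⟩)
  -- the weight function
  set φ : ℝ → ℝ := fun s => Real.exp (-u * s) * K_F s with hφdef
  have hφm : Measurable φ := (Real.measurable_exp.comp (measurable_const.mul measurable_id)).mul hKFm
  have hφi : IntegrableOn φ (Ioc (0 : ℝ) T) := by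
    refine Integrable.mono hKFi hφm.aestronglyMeasurable ?_
    filter_upwards [ae_restrict_mem measurableSet_Ioc] with s hs
    have h1 : Real.exp (-u * s) ≤ 1 := by
      rw [Real.exp_le_one_iff]; nlinarith [hs.1, hu.le]
    rw [hφdef]
    simp only [norm_mul, Real.norm_eq_abs, Real.abs_exp]
    calc Real.exp (-u * s) * |K_F s| ≤ 1 * |K_F s| :=
          mul_le_mul_of_nonneg_right h1 (abs_nonneg _)
      _ = |K_F s| := one_mul _
  set C : ℝ := ∫ r in Ioc (0 : ℝ) T, φ r with hCdef
  have hC0 : 0 ≤ C :=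
    setIntegral_nonneg measurableSet_Ioc fun s hs =>
      mul_nonneg (Real.exp_pos _).le (hKFnn s hs)
  -- joint continuity via clamping
  set c : ℝ → ℝ := fun s => max 0 (min s T) with hcdef
  have hc : Continuous c := continuous_const.max (continuous_id.min continuous_const)
  have hcmem : ∀ s, c s ∈ Icc (0 : ℝ) T := fun s =>
    ⟨le_max_left _ _, max_le hT.le (min_le_right _ _)⟩
  have hceq : ∀ s ∈ Icc (0 : ℝ) T, c s = s := fun s hs => by
    rw [hcdef]; simp only; rw [min_eq_left hs.2, max_eq_right hs.1]
  have hΦ : Continuous fun p : ℝ × E => S (c p.1) p.2 := by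
    rw [continuous_iff_continuousAt]
    rintro ⟨s₀, v₀⟩
    rw [ContinuousAt, tendsto_iff_norm_sub_tendsto_zero]
    have hb : Filter.Tendsto (fun p : ℝ × E => M * ‖p.2 - v₀‖ + ‖S (c p.1) v₀ - S (c s₀) v₀‖)
        (nhds (s₀, v₀)) (nhds 0) := by
      have h1 : Continuous fun p : ℝ × E => M * ‖p.2 - v₀‖ :=
        continuous_const.mul (continuous_snd.sub continuous_const).norm
      have h2 : Continuous fun p : ℝ × E => ‖S (c p.1) v₀ - S (c s₀) v₀‖ :=
        ((((hScont v₀).comp hc).comp continuous_fst).sub continuous_const).norm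
      have := (h1.add h2).tendsto (s₀, v₀)
      simpa [Pi.add_def] using this
    refine squeeze_zero (fun p => norm_nonneg _) (fun p => ?_) hb
    have htri : ‖S (c p.1) p.2 - S (c s₀) v₀‖ ≤
        ‖S (c p.1) p.2 - S (c p.1) v₀‖ + ‖S (c p.1) v₀ - S (c s₀) v₀‖ :=
      norm_sub_le_norm_sub_add_norm_sub _ _ _
    refine htri.trans (add_le_add ?_ le_rfl)
    rw [← map_sub]
    calc ‖S (c p.1) (p.2 - v₀)‖ ≤ ‖S (c p.1)‖ * ‖p.2 - v₀‖ := (S (c p.1)).le_opNorm _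
      _ ≤ M * ‖p.2 - v₀‖ :=
        mul_le_mul_of_nonneg_right (hM _ (hcmem _)) (norm_nonneg _)
  -- main estimate, pointwise in t
  refine Real.iSup_le (fun t => Real.iSup_le (fun ht => ?_) (mul_nonneg hC0 hN0))
    (mul_nonneg hC0 hN0)
  obtain ⟨ht0, htT⟩ := ht
  have hsub : Ioc (0 : ℝ) t ⊆ Ioc (0 : ℝ) T := Ioc_subset_Ioc_right htT
  set μt := volume.restrict (Ioc (0 : ℝ) t) with hμt
  have hXm' : AEStronglyMeasurable X μt :=
    hXm.mono_measure (Measure.restrict_mono hsub le_rfl)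
  have hYm' : AEStronglyMeasurable Y μt :=
    hYm.mono_measure (Measure.restrict_mono hsub le_rfl)
  -- a.e., points of Ioc 0 t are in Ioo 0 t
  have hae : ∀ᵐ r ∂μt, r ∈ Ioo (0 : ℝ) t := by
    have h2 : ∀ᵐ r : ℝ ∂μt, r ≠ t := by
      refine ae_restrict_of_ae ?_
      rw [ae_iff]
      have he : {a : ℝ | ¬a ≠ t} = {t} := by ext a; simp
      rw [he]
      exact measure_singleton t
    filter_upwards [ae_restrict_mem measurableSet_Ioc, h2] with r hr hne
    exact ⟨hr.1, lt_of_le_of_ne hr.2 hne⟩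
  have hmemIoc : ∀ r ∈ Ioo (0 : ℝ) t, t - r ∈ Ioc (0 : ℝ) T :=
    fun r hr => ⟨by linarith [hr.2], by linarith [hr.1]⟩
  -- measurability of the integrands
  have key : ∀ Z : ℝ → E, AEStronglyMeasurable Z μt →
      AEStronglyMeasurable (fun r => S (t - r) (F (Z r))) μt := by
    intro Z hZ
    have hpair : AEStronglyMeasurable (fun r => ((t - r : ℝ), F (Z r))) μt :=
      ((continuous_const.sub continuous_id).aestronglyMeasurable).prodMk
        (hF.comp_aestronglyMeasurable hZ)
    have h1 : AEStronglyMeasurable (fun r => S (c (t - r)) (F (Z r))) μt :=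
      hΦ.comp_aestronglyMeasurable hpair
    refine h1.congr ?_
    filter_upwards [ae_restrict_mem measurableSet_Ioc] with r hr
    have : t - r ∈ Icc (0 : ℝ) T := ⟨by linarith [hr.2], by linarith [hr.1]⟩
    rw [hceq _ this]
  have hfXm : AEStronglyMeasurable (fun r => S (t - r) (F (X r))) μt := key X hXm'
  have hfYm : AEStronglyMeasurable (fun r => S (t - r) (F (Y r))) μt := key Y hYm'
  -- integrability of r ↦ K_F (t - r) on Ioc 0 t
  have hKt : IntegrableOn (fun r => K_F (t - r)) (Ioc (0 : ℝ) t) := by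
    have h1 : IntervalIntegrable K_F volume 0 T :=
      (intervalIntegrable_iff_integrableOn_Ioc_of_le hT.le).2 hKFi
    have h2 : IntervalIntegrable K_F volume 0 t :=
      h1.mono_set (by rw [uIcc_of_le ht0, uIcc_of_le hT.le]; exact Icc_subset_Icc le_rfl htT)
    have h3 := h2.comp_sub_left t
    simp only [sub_zero, sub_self] at h3
    exact (intervalIntegrable_iff_integrableOn_Ioc_of_le ht0).1 h3.symm
  -- integrability of r ↦ φ (t - r) on Ioc 0 t
  have hφt : IntegrableOn (fun r => φ (t - r)) (Ioc (0 : ℝ) t) := by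
    have h1 : IntervalIntegrable φ volume 0 T :=
      (intervalIntegrable_iff_integrableOn_Ioc_of_le hT.le).2 hφi
    have h2 : IntervalIntegrable φ volume 0 t :=
      h1.mono_set (by rw [uIcc_of_le ht0, uIcc_of_le hT.le]; exact Icc_subset_Icc le_rfl htT)
    have h3 := h2.comp_sub_left t
    simp only [sub_zero, sub_self] at h3
    exact (intervalIntegrable_iff_integrableOn_Ioc_of_le ht0).1 h3.symm
  -- integrability of fY
  have hfYi : Integrable (fun r => S (t - r) (F (Y r))) μt := by
    refine Integrable.mono (g := fun r => K_F (t - r) * BY + M * ‖F 0‖) ?_ hfYm ?_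
    · exact (hKt.mul_const BY).add
        (integrableOn_const measure_Ioc_lt_top.ne)
    · filter_upwards [hae] with r hr
      have htr := hmemIoc r hr
      have hrIcc : r ∈ Icc (0 : ℝ) T := ⟨hr.1.le, le_trans hr.2.le htT⟩
      have h1 : ‖S (t - r) (F (Y r) - F 0)‖ ≤ K_F (t - r) * ‖Y r - 0‖ :=
        hLip _ htr _ _
      rw [sub_zero] at h1
      have h2 : ‖S (t - r) (F 0)‖ ≤ M * ‖F 0‖ :=
        le_trans ((S (t - r)).le_opNorm _)
          (mul_le_mul_of_nonneg_right (hM _ ⟨by linarith [hr.2], by linarith [hr.1]⟩)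
            (norm_nonneg _))
      have h3 : ‖S (t - r) (F (Y r))‖ ≤
          ‖S (t - r) (F (Y r) - F 0)‖ + ‖S (t - r) (F 0)‖ := by
        have := norm_add_le (S (t - r) (F (Y r)) - S (t - r) (F 0)) (S (t - r) (F 0))
        rw [sub_add_cancel, ← map_sub] at this
        exact this
      have h4 : K_F (t - r) * ‖Y r‖ ≤ K_F (t - r) * BY :=
        mul_le_mul_of_nonneg_left (hYb r hrIcc) (hKFnn _ htr)
      calc ‖S (t - r) (F (Y r))‖ ≤ K_F (t - r) * BY + M * ‖F 0‖ := by linarith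
        _ ≤ ‖K_F (t - r) * BY + M * ‖F 0‖‖ := le_abs_self _
  -- the bound function
  set b : ℝ → ℝ := fun r => N * Real.exp (u * t) * φ (t - r) with hbdef
  have hb_int : Integrable b μt := hφt.const_mul _
  -- a.e. bound on the difference
  have hbound : ∀ᵐ r ∂μt, ‖S (t - r) (F (X r)) - S (t - r) (F (Y r))‖ ≤ b r := by
    filter_upwards [hae] with r hr
    have htr := hmemIoc r hr
    have hrIcc : r ∈ Icc (0 : ℝ) T := ⟨hr.1.le, le_trans hr.2.le htT⟩
    have h1 : ‖X r - Y r‖ ≤ Real.exp (u * r) * N := by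
      have h2 : Real.exp (-u * r) * ‖X r - Y r‖ ≤ N := hNle r hrIcc
      have h3 := mul_le_mul_of_nonneg_left h2 (Real.exp_pos (u * r)).le
      have h4 : Real.exp (u * r) * Real.exp (-u * r) = 1 := by
        rw [← Real.exp_add, show u * r + -u * r = 0 by ring, Real.exp_zero]
      have h5 : ‖X r - Y r‖ = Real.exp (u * r) * (Real.exp (-u * r) * ‖X r - Y r‖) := by
        rw [← mul_assoc, h4, one_mul]
      rw [h5]; exact h3
    rw [← map_sub]
    calc ‖S (t - r) (F (X r) - F (Y r))‖ ≤ K_F (t - r) * ‖X r - Y r‖ := hLip _ htr _ _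
      _ ≤ K_F (t - r) * (Real.exp (u * r) * N) :=
          mul_le_mul_of_nonneg_left h1 (hKFnn _ htr)
      _ = b r := by
          have h6 : Real.exp (-u * (t - r)) * Real.exp (u * t) = Real.exp (u * r) := by
            rw [← Real.exp_add]; congr 1; ring
          rw [hbdef, hφdef]
          simp only
          rw [← h6]
          ring
  -- the difference function is integrable, hence fX is
  have hgi : Integrable (fun r => S (t - r) (F (X r)) - S (t - r) (F (Y r))) μt := by
    refine Integrable.mono hb_int (hfXm.sub hfYm) ?_
    filter_upwards [hbound] with r hr
    exact hr.trans (le_abs_self _)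
  have hfXi : Integrable (fun r => S (t - r) (F (X r))) μt := by
    have h := hgi.add hfYi
    refine h.congr (Filter.Eventually.of_forall fun r => ?_)
    simp
  -- putting it together
  have hdiff : (∫ r in Ioc (0 : ℝ) t, S (t - r) (F (X r))) -
      (∫ r in Ioc (0 : ℝ) t, S (t - r) (F (Y r))) =
      ∫ r in Ioc (0 : ℝ) t, (S (t - r) (F (X r)) - S (t - r) (F (Y r))) :=
    (integral_sub hfXi hfYi).symm
  have hnormint : ‖∫ r in Ioc (0 : ℝ) t, (S (t - r) (F (X r)) - S (t - r) (F (Y r)))‖ ≤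
      ∫ r in Ioc (0 : ℝ) t, b r :=
    norm_integral_le_of_norm_le hb_int hbound
  have hbint : ∫ r in Ioc (0 : ℝ) t, b r =
      N * Real.exp (u * t) * ∫ r in Ioc (0 : ℝ) t, φ (t - r) := by
    rw [hbdef]
    exact integral_const_mul _ _
  have hsubst : (∫ r in Ioc (0 : ℝ) t, φ (t - r)) = ∫ r in Ioc (0 : ℝ) t, φ r := by
    rw [← intervalIntegral.integral_of_le ht0, ← intervalIntegral.integral_of_le ht0,
      intervalIntegral.integral_comp_sub_left φ t, sub_self, sub_zero]
  have hmono : (∫ r in Ioc (0 : ℝ) t, φ r) ≤ C := by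
    refine setIntegral_mono_set hφi ?_ (HasSubset.Subset.eventuallyLE hsub)
    filter_upwards [ae_restrict_mem measurableSet_Ioc] with s hs
    exact mul_nonneg (Real.exp_pos _).le (hKFnn s hs)
  calc Real.exp (-u * t) *
      ‖(S t x₀ + ∫ r in Ioc (0 : ℝ) t, S (t - r) (F (X r))) -
        (S t x₀ + ∫ r in Ioc (0 : ℝ) t, S (t - r) (F (Y r)))‖
      = Real.exp (-u * t) *
        ‖(∫ r in Ioc (0 : ℝ) t, S (t - r) (F (X r))) -
          (∫ r in Ioc (0 : ℝ) t, S (t - r) (F (Y r)))‖ := by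
        rw [add_sub_add_left_eq_sub]
    _ ≤ Real.exp (-u * t) * (N * Real.exp (u * t) * ∫ r in Ioc (0 : ℝ) t, φ r) := by
        rw [hdiff]
        refine mul_le_mul_of_nonneg_left ?_ (Real.exp_pos _).le
        rw [← hsubst, ← hbint]
        exact hnormint
    _ = N * (∫ r in Ioc (0 : ℝ) t, φ r) := by
        rw [show Real.exp (-u * t) * (N * Real.exp (u * t) * ∫ r in Ioc (0 : ℝ) t, φ r)
          = (Real.exp (-u * t) * Real.exp (u * t)) * (N * ∫ r in Ioc (0 : ℝ) t, φ r) by ring,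
          ← Real.exp_add, show -u * t + u * t = 0 by ring, Real.exp_zero, one_mul]
    _ ≤ N * C := mul_le_mul_of_nonneg_left hmono hN0
    _ = C * N := mul_comm _ _
end

section
/- Let E be a real Banach space, T > 0, and let S be a strongly continuous semigroup on E with M := sup_{t∈[0,T]} ‖S(t)‖_{L(E)} < ∞. Let F : E → E be continuous and K_{F,0} : (0,T) → [0,∞) measurable with ∫₀ᵀ K_{F,0}(r) dr < ∞ and ‖S(t)F(z)‖ ≤ K_{F,0}(t)(1 + ‖z‖) for all t ∈ (0,T] and z ∈ E. Then for every bounded strongly measurable Y : [0,T] → E, the deterministic convolution t ↦ ∫₀ᵗ S(t−r) F(Y(r)) dr is a continuous function from [0,T] to E. -/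
open MeasureTheory Set Real

/-- For a bounded strongly measurable `Y : [0,T] → E`, the
deterministic convolution `t ↦ ∫₀ᵗ S(t-r) F(Y(r)) dr` is continuous from
`[0,T]` to `E`, under the integrated linear-growth condition on `F`. -/
theorem stmt_6
    {E : Type*} [NormedAddCommGroup E] [NormedSpace ℝ E] [CompleteSpace E]
    (T : ℝ) (hT : 0 < T)
    (S : ℝ → E →L[ℝ] E)
    (hS0 : S 0 = ContinuousLinearMap.id ℝ E)
    (hSadd : ∀ s t : ℝ, 0 ≤ s → 0 ≤ t → S (t + s) = (S t).comp (S s))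
    (hScont : ∀ x : E, Continuous fun t : ℝ => S t x)
    (M : ℝ) (hM : ∀ t ∈ Icc (0 : ℝ) T, ‖S t‖ ≤ M)
    (F : E → E) (hF : Continuous F)
    (K_F0 : ℝ → ℝ) (hKF0m : Measurable K_F0)
    (hKF0nn : ∀ r ∈ Ioc (0 : ℝ) T, 0 ≤ K_F0 r)
    (hKF0i : IntegrableOn K_F0 (Ioc (0 : ℝ) T))
    (hGrow : ∀ t ∈ Ioc (0 : ℝ) T, ∀ z : E, ‖S t (F z)‖ ≤ K_F0 t * (1 + ‖z‖))
    (Y : ℝ → E)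
    (hYm : AEStronglyMeasurable Y (volume.restrict (Ioc (0 : ℝ) T)))
    (B : ℝ) (hYb : ∀ t ∈ Icc (0 : ℝ) T, ‖Y t‖ ≤ B) :
    ContinuousOn (fun t : ℝ => ∫ r in Ioc (0 : ℝ) t, S (t - r) (F (Y r)))
      (Icc (0 : ℝ) T) := by
  have hB : (0:ℝ) ≤ B := (norm_nonneg _).trans (hYb 0 ⟨le_rfl, hT.le⟩)
  have hB1 : (0:ℝ) < 1 + B := by linarith
  have hM0 : (0:ℝ) ≤ M := (norm_nonneg (S 0)).trans (hM 0 ⟨le_rfl, hT.le⟩)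
  set Z : ℝ → E := fun r => F (Y r) with hZdef
  -- the "clamped" evaluation map is jointly continuous
  set cl : ℝ → ℝ := fun t => min (max t 0) T with hcl
  have hclmem : ∀ t, cl t ∈ Icc (0:ℝ) T := fun t =>
    ⟨le_min (le_max_right _ _) hT.le, min_le_right _ _⟩
  have hclc : Continuous cl := (continuous_id.max continuous_const).min continuous_const
  have hΦ : Continuous (fun p : ℝ × E => S (cl p.1) p.2) := by
    rw [continuous_iff_continuousAt]
    intro p
    have h2 : Filter.Tendsto (fun q : ℝ × E => S (cl q.1) p.2) (nhds p)
        (nhds (S (cl p.1) p.2)) :=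
      (((hScont p.2).comp hclc).comp continuous_fst).tendsto p
    have h3 : Filter.Tendsto (fun q : ℝ × E => S (cl q.1) q.2 - S (cl q.1) p.2)
        (nhds p) (nhds 0) := by
      apply squeeze_zero_norm (a := fun q : ℝ × E => M * ‖q.2 - p.2‖)
        (f := fun q : ℝ × E => S (cl q.1) q.2 - S (cl q.1) p.2)
      · intro q
        have : S (cl q.1) q.2 - S (cl q.1) p.2 = S (cl q.1) (q.2 - p.2) := by
          rw [map_sub]
        rw [this]
        calc ‖S (cl q.1) (q.2 - p.2)‖ ≤ ‖S (cl q.1)‖ * ‖q.2 - p.2‖ :=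
              (S (cl q.1)).le_opNorm _
          _ ≤ M * ‖q.2 - p.2‖ := by
              gcongr; exact hM _ (hclmem q.1)
      · have : Filter.Tendsto (fun q : ℝ × E => ‖q.2 - p.2‖) (nhds p)
            (nhds ‖p.2 - p.2‖) :=
          ((continuous_snd.sub continuous_const).norm).tendsto p
        simpa using this.const_mul M
    have := h3.add h2
    simpa [ContinuousAt] using this
  -- integrability of the integrand on `Ioc 0 t'`
  have hYm' : ∀ c, c ≤ T → AEStronglyMeasurable Y (volume.restrict (Ioc (0:ℝ) c)) :=
    fun c hc => hYm.mono_measure (Measure.restrict_mono (Ioc_subset_Ioc_right hc) le_rfl)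
  have hmeas : ∀ t', t' ≤ T → ∀ c, c ≤ t' →
      AEStronglyMeasurable (fun r => S (t' - r) (Z r)) (volume.restrict (Ioc (0:ℝ) c)) := by
    intro t' ht' c hc
    have hZm : AEStronglyMeasurable Z (volume.restrict (Ioc (0:ℝ) c)) :=
      hF.comp_aestronglyMeasurable (hYm' c (hc.trans ht'))
    have hpair : AEStronglyMeasurable (fun r : ℝ => ((t' - r : ℝ), Z r))
        (volume.restrict (Ioc (0:ℝ) c)) :=
      ((continuous_const.sub continuous_id).aestronglyMeasurable).prodMk hZm
    have := hΦ.comp_aestronglyMeasurable hpair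
    refine this.congr ?_
    filter_upwards [ae_restrict_mem measurableSet_Ioc] with r hr
    have h1 : (0:ℝ) ≤ t' - r := by
      have := hr.2.trans hc; linarith
    have h2 : t' - r ≤ T := by
      have := hr.1; linarith [ht']
    simp only [cl, max_eq_left h1, min_eq_left h2]
  -- a.e. norm bound on `Ioc 0 t'`
  have hbd : ∀ t' ∈ Icc (0:ℝ) T, ∀ᵐ r ∂(volume.restrict (Ioc (0:ℝ) t')),
      ‖S (t' - r) (Z r)‖ ≤ K_F0 (t' - r) * (1 + B) := by
    intro t' ht'
    have hne : ∀ᵐ r ∂(volume.restrict (Ioc (0:ℝ) t')), r ≠ t' := by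
      refine ae_restrict_of_ae ?_
      have : (volume : Measure ℝ) {t'} = 0 := measure_singleton t'
      rw [ae_iff]
      convert this using 2
      ext x; simp
    filter_upwards [ae_restrict_mem measurableSet_Ioc, hne] with r hr hrne
    have hrt : r < t' := lt_of_le_of_ne hr.2 hrne
    have hmem : t' - r ∈ Ioc (0:ℝ) T := ⟨by linarith, by linarith [ht'.2, hr.1]⟩
    calc ‖S (t' - r) (F (Y r))‖ ≤ K_F0 (t' - r) * (1 + ‖Y r‖) := hGrow _ hmem (Y r)
      _ ≤ K_F0 (t' - r) * (1 + B) := by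
          have := hYb r ⟨hr.1.le, hr.2.trans ht'.2⟩
          have := hKF0nn _ hmem
          gcongr
  -- integrability of the dominating function
  have hdom : ∀ t' ∈ Icc (0:ℝ) T, IntegrableOn (fun r => K_F0 (t' - r) * (1 + B))
      (Ioc (0:ℝ) t') := by
    intro t' ht'
    have hKint : IntervalIntegrable K_F0 volume 0 T :=
      (intervalIntegrable_iff_integrableOn_Ioc_of_le hT.le).mpr hKF0i
    have hKint' : IntervalIntegrable K_F0 volume 0 t' := by
      refine hKint.mono_set ?_
      rw [uIcc_of_le ht'.1, uIcc_of_le hT.le]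
      exact Icc_subset_Icc le_rfl ht'.2
    have h1 : IntervalIntegrable (fun r => K_F0 (t' - r)) volume (t' - 0) (t' - t') :=
      hKint'.comp_sub_left t'
    have h2 : IntervalIntegrable (fun r => K_F0 (t' - r)) volume 0 t' := by
      simpa using h1.symm
    have h3 : IntegrableOn (fun r => K_F0 (t' - r)) (Ioc (0:ℝ) t') := by
      rw [intervalIntegrable_iff_integrableOn_Ioc_of_le ht'.1] at h2
      exact h2
    exact h3.mul_const _
  -- integrability of the integrand
  have hint : ∀ t' ∈ Icc (0:ℝ) T, IntegrableOn (fun r => S (t' - r) (Z r))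
      (Ioc (0:ℝ) t') := by
    intro t' ht'
    exact Integrable.mono' (hdom t' ht') (hmeas t' ht'.2 t' le_rfl) (hbd t' ht')
  -- primitive of K_F0 and its continuity at 0
  set P : ℝ → ℝ := fun x => ∫ s in Ioc (0:ℝ) x, K_F0 s with hPdef
  have hPcont : ContinuousOn P (Icc (0:ℝ) T) := by
    apply intervalIntegral.continuousOn_primitive
    rwa [integrableOn_Icc_iff_integrableOn_Ioc]
  -- tail estimate
  have htail : ∀ t' ∈ Icc (0:ℝ) T, ∀ a, 0 ≤ a → a ≤ t' →
      ‖∫ r in Ioc a t', S (t' - r) (Z r)‖ ≤ (1 + B) * P (t' - a) := by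
    intro t' ht' a ha0 hat
    have hsub : Ioc a t' ⊆ Ioc (0:ℝ) t' := Ioc_subset_Ioc_left ha0
    have hbd' : ∀ᵐ r ∂(volume.restrict (Ioc a t')),
        ‖S (t' - r) (Z r)‖ ≤ K_F0 (t' - r) * (1 + B) :=
      ae_restrict_of_ae_restrict_of_subset hsub (hbd t' ht')
    have hdom' : IntegrableOn (fun r => K_F0 (t' - r) * (1 + B)) (Ioc a t') :=
      (hdom t' ht').mono_set hsub
    calc ‖∫ r in Ioc a t', S (t' - r) (Z r)‖
        ≤ ∫ r in Ioc a t', K_F0 (t' - r) * (1 + B) :=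
          norm_integral_le_of_norm_le hdom' hbd'
      _ = (∫ r in Ioc a t', K_F0 (t' - r)) * (1 + B) := by
          rw [integral_mul_const]
      _ = (1 + B) * P (t' - a) := by
          rw [mul_comm]
          congr 1
          rw [← intervalIntegral.integral_of_le hat,
            intervalIntegral.integral_comp_sub_left K_F0 t']
          rw [sub_self, intervalIntegral.integral_of_le (by linarith)]
  -- main argument
  intro t₀ ht₀
  rw [ContinuousWithinAt, Metric.tendsto_nhds]
  intro ε hε
  -- choose η
  have hPc0 : ContinuousWithinAt P (Icc (0:ℝ) T) 0 := hPcont 0 ⟨le_rfl, hT.le⟩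
  rw [Metric.continuousWithinAt_iff] at hPc0
  obtain ⟨δ, hδ0, hδ⟩ := hPc0 (ε / (4 * (1 + B))) (by positivity)
  set η : ℝ := min (δ / 3) T with hηdef
  have hη0 : 0 < η := lt_min (by linarith) hT
  have hηT : η ≤ T := min_le_right _ _
  have hsmall : ∀ x, 0 ≤ x → x ≤ T → x ≤ 2 * η → (1 + B) * P x < ε / 4 := by
    intro x hx0 hxT hx2
    have hxδ : x < δ := by
      have : η ≤ δ / 3 := min_le_left _ _
      linarith
    have := hδ ⟨hx0, hxT⟩ (show dist x 0 < δ by rw [Real.dist_eq, sub_zero, abs_of_nonneg hx0]; exact hxδ)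
    have hP0 : P 0 = 0 := by simp [P]
    rw [hP0, Real.dist_eq, sub_zero] at this
    have hPle : P x ≤ |P x| := le_abs_self _
    calc (1 + B) * P x ≤ (1 + B) * |P x| := by gcongr
      _ < (1 + B) * (ε / (4 * (1 + B))) := by gcongr
      _ = ε / 4 := by field_simp
  set a : ℝ := max (t₀ - η) 0 with hadef
  have ha0 : 0 ≤ a := le_max_right _ _
  have hat₀ : a ≤ t₀ := max_le (by linarith) ht₀.1
  have haT : a ≤ T := hat₀.trans ht₀.2
  -- dominated convergence for the main part
  set g : ℝ → E := fun t' => ∫ r in Ioc (0:ℝ) a, S (t' - r) (Z r) with hgdef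
  have hev1 : ∀ᶠ t' in nhdsWithin t₀ (Icc (0:ℝ) T), dist t' t₀ < η / 2 := by
    apply Filter.Eventually.filter_mono nhdsWithin_le_nhds
    filter_upwards [Metric.ball_mem_nhds t₀ (by positivity : (0:ℝ) < η / 2)] with x hx
    exact hx
  have hev2 : ∀ᶠ t' in nhdsWithin t₀ (Icc (0:ℝ) T), t' ∈ Icc (0:ℝ) T :=
    eventually_mem_nhdsWithin
  have hbound : ∀ t' ∈ Icc (0:ℝ) T, dist t' t₀ < η / 2 →
      ∀ᵐ r ∂(volume.restrict (Ioc (0:ℝ) a)),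
        ‖S (t' - r) (Z r)‖ ≤ M * (K_F0 (η / 4) * (1 + B)) := by
    intro t' ht' hd
    filter_upwards [ae_restrict_mem measurableSet_Ioc] with r hr
    -- here `a > 0`, so `a = t₀ - η`
    have ha_pos : 0 < a := lt_of_lt_of_le hr.1 hr.2
    have ha_eq : a = t₀ - η := by
      rcases max_cases (t₀ - η) 0 with ⟨h1, _⟩ | ⟨h1, h2⟩
      · exact h1
      · exfalso; rw [hadef] at ha_pos; rw [h1] at ha_pos; exact lt_irrefl 0 ha_pos
    have ht'lb : t₀ - η / 2 < t' := by
      rw [Real.dist_eq] at hd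
      have := abs_lt.mp hd
      linarith [this.1]
    have hrle : r ≤ t₀ - η := by rw [← ha_eq]; exact hr.2
    have h1 : η / 2 ≤ t' - r := by linarith
    have h2 : t' - r ≤ T := by linarith [ht'.2, hr.1]
    have hA0 : 0 ≤ t' - r - η / 4 := by linarith
    have hAT : t' - r - η / 4 ≤ T := by linarith
    have hsplit : S (t' - r) = (S (t' - r - η / 4)).comp (S (η / 4)) := by
      have := hSadd (η / 4) (t' - r - η / 4) (by linarith) hA0
      rw [← this]; congr 1; ring
    rw [hsplit]
    have hη4 : η / 4 ∈ Ioc (0:ℝ) T := ⟨by linarith, by linarith⟩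
    calc ‖S (t' - r - η / 4) (S (η / 4) (Z r))‖
        ≤ ‖S (t' - r - η / 4)‖ * ‖S (η / 4) (Z r)‖ := (S _).le_opNorm _
      _ ≤ M * (K_F0 (η / 4) * (1 + B)) := by
          have hop : ‖S (t' - r - η / 4)‖ ≤ M := hM _ ⟨hA0, hAT⟩
          have hval : ‖S (η / 4) (Z r)‖ ≤ K_F0 (η / 4) * (1 + B) := by
            calc ‖S (η / 4) (F (Y r))‖ ≤ K_F0 (η / 4) * (1 + ‖Y r‖) :=
                  hGrow _ hη4 (Y r)
              _ ≤ K_F0 (η / 4) * (1 + B) := by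
                  have := hYb r ⟨hr.1.le, (hr.2.trans haT)⟩
                  have := hKF0nn _ hη4
                  gcongr
          calc ‖S (t' - r - η / 4)‖ * ‖S (η / 4) (Z r)‖
              ≤ M * ‖S (η / 4) (Z r)‖ := by gcongr
            _ ≤ M * (K_F0 (η / 4) * (1 + B)) := by gcongr
  have hg_tendsto : Filter.Tendsto g (nhdsWithin t₀ (Icc (0:ℝ) T)) (nhds (g t₀)) := by
    apply tendsto_integral_filter_of_dominated_convergence
      (fun _ => M * (K_F0 (η / 4) * (1 + B)))
    · filter_upwards [hev1, hev2] with t' hd ht'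
      have ht'a : a ≤ t' := by
        rcases max_cases (t₀ - η) 0 with ⟨h1, _⟩ | ⟨h1, _⟩
        · rw [hadef, h1]
          rw [Real.dist_eq] at hd
          have := abs_lt.mp hd
          linarith [this.1]
        · rw [hadef, h1]; exact ht'.1
      exact hmeas t' ht'.2 a (by linarith)
    · filter_upwards [hev1, hev2] with t' hd ht'
      exact hbound t' ht' hd
    · exact ((integrableOn_const_iff).mpr (Or.inr measure_Ioc_lt_top)).mono_set (subset_refl _)
    · refine Filter.Eventually.of_forall fun r => ?_
      have : Filter.Tendsto (fun t' : ℝ => S (t' - r) (Z r)) (nhds t₀)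
          (nhds (S (t₀ - r) (Z r))) :=
        ((hScont (Z r)).comp (continuous_id.sub continuous_const)).tendsto t₀
      exact this.mono_left nhdsWithin_le_nhds
  have hg_ev : ∀ᶠ t' in nhdsWithin t₀ (Icc (0:ℝ) T), dist (g t') (g t₀) < ε / 4 :=
    Metric.tendsto_nhds.mp hg_tendsto (ε / 4) (by positivity)
  filter_upwards [hev1, hev2, hg_ev] with t' hd ht' hgd
  have ht'a : a ≤ t' := by
    rcases max_cases (t₀ - η) 0 with ⟨h1, _⟩ | ⟨h1, _⟩
    · rw [hadef, h1]
      rw [Real.dist_eq] at hd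
      have := abs_lt.mp hd
      linarith [this.1]
    · rw [hadef, h1]; exact ht'.1
  -- split both integrals
  have hsplit : ∀ u ∈ Icc (0:ℝ) T, a ≤ u →
      (∫ r in Ioc (0:ℝ) u, S (u - r) (Z r)) =
        g u + ∫ r in Ioc a u, S (u - r) (Z r) := by
    intro u hu hau
    rw [hgdef]
    rw [← setIntegral_union (Ioc_disjoint_Ioc_of_le le_rfl) measurableSet_Ioc
      ((hint u hu).mono_set (Ioc_subset_Ioc_right hau))
      ((hint u hu).mono_set (Ioc_subset_Ioc_left ha0)),
      Ioc_union_Ioc_eq_Ioc ha0 hau]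
  have ht'mem : t' ∈ Icc (0:ℝ) T := ht'
  have e1 := hsplit t' ht'mem ht'a
  have e2 := hsplit t₀ ht₀ hat₀
  -- tail bounds
  have htl1 : ‖∫ r in Ioc a t', S (t' - r) (Z r)‖ < ε / 4 := by
    have h1 := htail t' ht'mem a ha0 ht'a
    have h2 : t' - a ≤ 2 * η := by
      have h3 : t₀ - η ≤ a := le_max_left _ _
      rw [Real.dist_eq] at hd
      have := abs_lt.mp hd
      linarith [this.2]
    have h4 := hsmall (t' - a) (by linarith) (by linarith [ht'.2]) h2
    linarith
  have htl0 : ‖∫ r in Ioc a t₀, S (t₀ - r) (Z r)‖ < ε / 4 := by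
    have h1 := htail t₀ ht₀ a ha0 hat₀
    have h2 : t₀ - a ≤ 2 * η := by
      have h3 : t₀ - η ≤ a := le_max_left _ _
      linarith
    have h4 := hsmall (t₀ - a) (by linarith) (by linarith [ht₀.2]) h2
    linarith
  -- conclude
  rw [dist_eq_norm, e1, e2]
  have : g t' + (∫ r in Ioc a t', S (t' - r) (Z r)) -
      (g t₀ + ∫ r in Ioc a t₀, S (t₀ - r) (Z r)) =
      (g t' - g t₀) + (∫ r in Ioc a t', S (t' - r) (Z r)) -
      (∫ r in Ioc a t₀, S (t₀ - r) (Z r)) := by abel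
  rw [this]
  rw [dist_eq_norm] at hgd
  calc ‖(g t' - g t₀) + (∫ r in Ioc a t', S (t' - r) (Z r)) -
      (∫ r in Ioc a t₀, S (t₀ - r) (Z r))‖
      ≤ ‖(g t' - g t₀) + (∫ r in Ioc a t', S (t' - r) (Z r))‖ +
        ‖∫ r in Ioc a t₀, S (t₀ - r) (Z r)‖ := norm_sub_le _ _
    _ ≤ ‖g t' - g t₀‖ + ‖∫ r in Ioc a t', S (t' - r) (Z r)‖ +
        ‖∫ r in Ioc a t₀, S (t₀ - r) (Z r)‖ := by
        have := norm_add_le (g t' - g t₀) (∫ r in Ioc a t', S (t' - r) (Z r))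
        linarith
    _ < ε / 4 + ε / 4 + ε / 4 := by linarith
    _ < ε := by linarith
end

section
/- Let O ⊆ ℝ^d be a bounded open set, q ∈ [1,∞), θ ∈ (0,1) and ε ∈ (θ, 1]. Then there exists a constant C depending only on d, q, θ, ε and O such that for every bounded ε-Hölder continuous function h : O → ℝ and every measurable u : O → ℝ with ‖u‖_{W^{θ,q}(O)} < ∞, the pointwise product u·h satisfies ‖u·h‖_{W^{θ,q}(O)} ≤ C ‖h‖_{C^ε(O)} ‖u‖_{W^{θ,q}(O)}. -/
open MeasureTheory Set Real

/-- The Sobolev–Slobodeckij norm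
`‖u‖_{W^{θ,q}(O)} = (‖u‖_{L^q(O)}^q + ∫_O ∫_O |u(ξ)-u(η)|^q / |ξ-η|^{d+θq} dξ dη)^{1/q}`. -/
noncomputable def slobNorm (d : ℕ) (O : Set (EuclideanSpace ℝ (Fin d))) (q θ : ℝ)
    (u : EuclideanSpace ℝ (Fin d) → ℝ) : ℝ :=
  ((∫ ξ in O, |u ξ| ^ q) +
      ∫ η in O, ∫ ξ in O, |u ξ - u η| ^ q / ‖ξ - η‖ ^ ((d : ℝ) + θ * q)) ^ (1 / q)

/-- The Hölder norm `‖h‖_{C^ε(O)} = sup_{ξ∈O} |h(ξ)| + sup_{ξ≠η∈O} |h(ξ)-h(η)|/|ξ-η|^ε`. -/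
noncomputable def holderNorm (d : ℕ) (O : Set (EuclideanSpace ℝ (Fin d))) (ε : ℝ)
    (h : EuclideanSpace ℝ (Fin d) → ℝ) : ℝ :=
  sSup ((fun ξ => |h ξ|) '' O) +
    sSup ((fun p : EuclideanSpace ℝ (Fin d) × EuclideanSpace ℝ (Fin d) =>
        |h p.1 - h p.2| / ‖p.1 - p.2‖ ^ ε) '' {p | p.1 ∈ O ∧ p.2 ∈ O ∧ p.1 ≠ p.2})

/-- Elementary inequality `(x+y)^q ≤ 2^q (x^q + y^q)` for nonnegative reals. -/
lemma aux_two_rpow {x y q : ℝ} (hx : 0 ≤ x) (hy : 0 ≤ y) (hq : 0 ≤ q) :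
    (x + y) ^ q ≤ 2 ^ q * (x ^ q + y ^ q) := by
  have h1 : x + y ≤ 2 * max x y := by
    rcases le_total x y with h | h
    · rw [max_eq_right h]; linarith
    · rw [max_eq_left h]; linarith
  have h2 : (x + y) ^ q ≤ (2 * max x y) ^ q :=
    Real.rpow_le_rpow (by positivity) h1 hq
  have h3 : (2 * max x y) ^ q = 2 ^ q * (max x y) ^ q :=
    Real.mul_rpow (by norm_num) (le_max_of_le_left hx)
  have h4 : (max x y) ^ q ≤ x ^ q + y ^ q := by
    rcases le_total x y with h | h
    · rw [max_eq_right h]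
      have := Real.rpow_nonneg hx q
      linarith
    · rw [max_eq_left h]
      have := Real.rpow_nonneg hy q
      linarith
  calc (x + y) ^ q ≤ 2 ^ q * (max x y) ^ q := by rw [← h3]; exact h2
    _ ≤ 2 ^ q * (x ^ q + y ^ q) := by
        have h2q : (0:ℝ) ≤ 2 ^ q := by positivity
        exact mul_le_mul_of_nonneg_left h4 h2q

/-- Integrability of the radial function `x ↦ ‖x‖^(α - d)` on a ball, for `α > 0`. -/
lemma aux_radial (d : ℕ) {α : ℝ} (hα : 0 < α) (R : ℝ) :
    IntegrableOn (fun x : EuclideanSpace ℝ (Fin d) => ‖x‖ ^ (α - d)) (Metric.ball 0 R) := by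
  have hmeas : Measurable fun x : EuclideanSpace ℝ (Fin d) => ‖x‖ ^ (α - (d : ℝ)) := by
    fun_prop
  rcases le_or_gt R 0 with hR | hR
  · rw [Metric.ball_eq_empty.2 hR]; exact integrableOn_empty
  rcases le_or_gt (d : ℝ) α with hdα | hdα
  · -- nonnegative exponent: bounded function on a finite measure set
    refine Measure.integrableOn_of_bounded (measure_ball_lt_top).ne
      hmeas.aestronglyMeasurable (M := R ^ (α - (d : ℝ))) ?_
    filter_upwards [ae_restrict_mem measurableSet_ball] with x hx
    rw [Real.norm_eq_abs, abs_of_nonneg (Real.rpow_nonneg (norm_nonneg _) _)]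
    exact Real.rpow_le_rpow (norm_nonneg _) (le_of_lt (mem_ball_zero_iff.1 hx))
      (by linarith)
  · -- singular case
    have hd : 0 < d := by exact_mod_cast hα.trans hdα
    haveI : Nonempty (Fin d) := ⟨⟨0, hd⟩⟩
    haveI : Nontrivial (EuclideanSpace ℝ (Fin d)) := by
      infer_instance
    set c := α - (d : ℝ) with hc
    have hcneg : c < 0 := by rw [hc]; linarith
    constructor
    · exact hmeas.aestronglyMeasurable.restrict
    · rw [hasFiniteIntegral_iff_ofReal
        (Filter.Eventually.of_forall fun x => Real.rpow_nonneg (norm_nonneg _) _)]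
      set A : ℕ → Set (EuclideanSpace ℝ (Fin d)) :=
        fun n => {x | R / 2 ^ (n + 1) ≤ ‖x‖} ∩ Metric.ball 0 (R / 2 ^ n) with hA
      have hAmeas : ∀ n, MeasurableSet (A n) := fun n =>
        (measurableSet_le measurable_const measurable_norm).inter measurableSet_ball
      have hcover : Metric.ball (0 : EuclideanSpace ℝ (Fin d)) R ⊆ {0} ∪ ⋃ n, A n := by
        intro x hx
        rcases eq_or_ne x 0 with rfl | hx0
        · exact Or.inl rfl
        · have hxn : 0 < ‖x‖ := norm_pos_iff.2 hx0
          have hxR : ‖x‖ < R := mem_ball_zero_iff.1 hx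
          have hP : ∃ n : ℕ, R / 2 ^ (n + 1) ≤ ‖x‖ := by
            obtain ⟨n, hn⟩ := exists_pow_lt_of_lt_one (div_pos hxn hR)
              (by norm_num : (1:ℝ)/2 < 1)
            refine ⟨n, ?_⟩
            have h2 : ((1:ℝ)/2) ^ n = 1 / 2 ^ n := by rw [div_pow, one_pow]
            rw [h2, div_lt_div_iff₀ (by positivity) hR] at hn
            have h3 : R / 2 ^ (n + 1) ≤ R / 2 ^ n := by
              apply div_le_div_of_nonneg_left hR.le (by positivity)
              exact pow_le_pow_right₀ (by norm_num) (Nat.le_succ n)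
            have h4 : R / 2 ^ n ≤ ‖x‖ := by
              rw [div_le_iff₀ (by positivity : (0:ℝ) < 2 ^ n)]
              nlinarith [hxn, hR]
            linarith
          set n₀ := Nat.find hP with hn₀
          have hkey : R / 2 ^ (n₀ + 1) ≤ ‖x‖ := Nat.find_spec hP
          have hupper : ‖x‖ < R / 2 ^ n₀ := by
            rcases Nat.eq_zero_or_pos n₀ with h0 | hpos
            · rw [h0]; simpa using hxR
            · obtain ⟨m, hm⟩ := Nat.exists_eq_succ_of_ne_zero hpos.ne'
              have := Nat.find_min hP (by omega : m < n₀)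
              push_neg at this
              rw [hm]
              exact this
          exact Or.inr (mem_iUnion.2 ⟨n₀, ⟨hkey, mem_ball_zero_iff.2 hupper⟩⟩)
      set B := volume (Metric.ball (0 : EuclideanSpace ℝ (Fin d)) 1) with hB
      have hBfin : B < ⊤ := measure_ball_lt_top
      have hbound : ∀ n : ℕ, (∫⁻ x in A n, ENNReal.ofReal (‖x‖ ^ c)) ≤
          ENNReal.ofReal ((R / 2 ^ (n + 1)) ^ c) *
            (ENNReal.ofReal ((R / 2 ^ n) ^ (d : ℕ)) * B) := by
        intro n
        have hpos1 : (0:ℝ) < R / 2 ^ (n + 1) := by positivity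
        have h1 : (∫⁻ x in A n, ENNReal.ofReal (‖x‖ ^ c)) ≤
            ∫⁻ _ in A n, ENNReal.ofReal ((R / 2 ^ (n + 1)) ^ c) := by
          apply setLIntegral_mono' (hAmeas n)
          intro x hx
          exact ENNReal.ofReal_le_ofReal
            (Real.rpow_le_rpow_of_nonpos hpos1 hx.1 hcneg.le)
        refine h1.trans ?_
        rw [setLIntegral_const]
        have h2 : volume (A n) ≤
            ENNReal.ofReal ((R / 2 ^ n) ^ (d : ℕ)) * B := by
          calc volume (A n) ≤ volume (Metric.ball (0 : EuclideanSpace ℝ (Fin d)) (R / 2 ^ n)) :=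
              measure_mono inter_subset_right
            _ = ENNReal.ofReal ((R / 2 ^ n) ^ (d : ℕ)) * B := by
                rw [Measure.addHaar_ball_of_pos _ _ (by positivity)]
                congr 2
                rw [finrank_euclideanSpace_fin]
        calc ENNReal.ofReal ((R / 2 ^ (n + 1)) ^ c) * volume (A n) ≤
            ENNReal.ofReal ((R / 2 ^ (n + 1)) ^ c) *
              (ENNReal.ofReal ((R / 2 ^ n) ^ (d : ℕ)) * B) := by
              exact mul_le_mul_right h2 _
          _ = _ := rfl
      -- identify each term with a geometric series
      have hterm : ∀ n : ℕ,
          ENNReal.ofReal ((R / 2 ^ (n + 1)) ^ c) * (ENNReal.ofReal ((R / 2 ^ n) ^ (d : ℕ)) * B) =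
          ENNReal.ofReal ((2:ℝ) ^ (-c) * R ^ α) * (ENNReal.ofReal ((2:ℝ) ^ (-α))) ^ n * B := by
        intro n
        have h2n : (0:ℝ) < (2:ℝ) ^ n := by positivity
        have hRn : (0:ℝ) < R / 2 ^ n := by positivity
        have e1 : (R / 2 ^ (n + 1)) ^ c = (2:ℝ) ^ (-c) * (R / 2 ^ n) ^ c := by
          have : R / 2 ^ (n + 1) = (R / 2 ^ n) / 2 := by ring
          rw [this, Real.div_rpow hRn.le (by norm_num), Real.rpow_neg (by norm_num)]
          ring
        have e2 : (R / 2 ^ n : ℝ) ^ (d : ℕ) = (R / 2 ^ n) ^ ((d : ℕ) : ℝ) :=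
          (Real.rpow_natCast _ _).symm
        have e3 : (R / 2 ^ n) ^ c * (R / 2 ^ n) ^ ((d : ℕ) : ℝ) = (R / 2 ^ n) ^ α := by
          rw [← Real.rpow_add hRn]
          congr 1
          rw [hc]; ring
        have e4 : (R / 2 ^ n) ^ α = R ^ α * ((2:ℝ) ^ (-α)) ^ n := by
          rw [Real.div_rpow (by positivity) (by positivity)]
          rw [← Real.rpow_natCast (2:ℝ) n, ← Real.rpow_mul (by norm_num),
            ← Real.rpow_natCast ((2:ℝ) ^ (-α)) n, ← Real.rpow_mul (by norm_num)]
          rw [div_eq_mul_inv, ← Real.rpow_neg (by positivity)]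
          congr 1
          ring
        have hreal : (R / 2 ^ (n + 1)) ^ c * (R / 2 ^ n : ℝ) ^ (d : ℕ) =
            (2:ℝ) ^ (-c) * R ^ α * ((2:ℝ) ^ (-α)) ^ n := by
          rw [e1, e2, mul_assoc, e3, e4]
          ring
        rw [← mul_assoc, ← ENNReal.ofReal_mul (by positivity), hreal,
          ENNReal.ofReal_mul (by positivity), ENNReal.ofReal_pow (by positivity)]
      set r : ENNReal := ENNReal.ofReal ((2:ℝ) ^ (-α)) with hr
      have hrlt : r < 1 := by
        rw [hr, ← ENNReal.ofReal_one]
        exact ENNReal.ofReal_lt_ofReal_iff_of_nonneg (by positivity) |>.2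
          (Real.rpow_lt_one_of_one_lt_of_neg (by norm_num) (by linarith))
      calc (∫⁻ x in Metric.ball (0 : EuclideanSpace ℝ (Fin d)) R, ENNReal.ofReal (‖x‖ ^ c))
          ≤ ∫⁻ x in ({0} ∪ ⋃ n, A n :
              Set (EuclideanSpace ℝ (Fin d))), ENNReal.ofReal (‖x‖ ^ c) :=
            lintegral_mono_set hcover
        _ ≤ (∫⁻ x in ({0} : Set (EuclideanSpace ℝ (Fin d))), ENNReal.ofReal (‖x‖ ^ c)) +
              ∫⁻ x in (⋃ n, A n), ENNReal.ofReal (‖x‖ ^ c) :=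
            lintegral_union_le _ _ _
        _ ≤ 0 + ∑' n, ∫⁻ x in A n, ENNReal.ofReal (‖x‖ ^ c) := by
            gcongr
            · rw [setLIntegral_measure_zero _ _ (measure_singleton _)]
            · exact lintegral_iUnion_le _ _
        _ ≤ 0 + ∑' n, ENNReal.ofReal ((2:ℝ) ^ (-c) * R ^ α) * r ^ n * B := by
            gcongr with n
            exact (hbound n).trans (le_of_eq (hterm n))
        _ = ENNReal.ofReal ((2:ℝ) ^ (-c) * R ^ α) * (1 - r)⁻¹ * B := by
            rw [zero_add]
            rw [ENNReal.tsum_mul_right, ENNReal.tsum_mul_left, ENNReal.tsum_geometric]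
        _ < ⊤ := by
            apply ENNReal.mul_lt_top (ENNReal.mul_lt_top ENNReal.ofReal_lt_top _) hBfin
            rw [ENNReal.inv_lt_top]
            exact tsub_pos_of_lt hrlt

/-- Shifted version of `aux_radial`. -/
lemma aux_shift_int (d : ℕ) {α : ℝ} (hα : 0 < α) (R : ℝ) (η : EuclideanSpace ℝ (Fin d)) :
    IntegrableOn (fun ξ : EuclideanSpace ℝ (Fin d) => ‖ξ - η‖ ^ (α - d)) (Metric.ball η R) := by
  have hpre : (fun ξ : EuclideanSpace ℝ (Fin d) => ξ - η) ⁻¹' (Metric.ball 0 R)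
      = Metric.ball η R := by
    ext ξ
    simp [Metric.mem_ball, dist_eq_norm]
  have key := (measurePreserving_sub_right (volume : Measure (EuclideanSpace ℝ (Fin d)))
      η).integrableOn_comp_preimage (MeasurableEquiv.subRight η).measurableEmbedding
      (f := fun x : EuclideanSpace ℝ (Fin d) => ‖x‖ ^ (α - (d:ℝ))) (s := Metric.ball 0 R)
  rw [hpre] at key
  exact key.2 (aux_radial d hα R)

/-- Shifted set integral identity. -/
lemma aux_shift_eq (d : ℕ) (c : ℝ) (R : ℝ) (η : EuclideanSpace ℝ (Fin d)) :
    (∫ ξ in Metric.ball η R, ‖ξ - η‖ ^ c) =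
      ∫ x in Metric.ball (0 : EuclideanSpace ℝ (Fin d)) R, ‖x‖ ^ c := by
  have hpre : (fun ξ : EuclideanSpace ℝ (Fin d) => ξ - η) ⁻¹' (Metric.ball 0 R)
      = Metric.ball η R := by
    ext ξ
    simp [Metric.mem_ball, dist_eq_norm]
  have key := (measurePreserving_sub_right (volume : Measure (EuclideanSpace ℝ (Fin d)))
      η).setIntegral_preimage_emb (MeasurableEquiv.subRight η).measurableEmbedding
      (fun x : EuclideanSpace ℝ (Fin d) => ‖x‖ ^ c) (Metric.ball 0 R)
  rw [hpre] at key
  exact key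

/-- Product estimate in Sobolev–Slobodeckij spaces: for a bounded
open `O ⊆ ℝ^d`, `θ ∈ (0,1)` and `ε ∈ (θ,1]`, there is `C = C(d,q,θ,ε,O)` such that
`‖u·h‖_{W^{θ,q}(O)} ≤ C ‖h‖_{C^ε(O)} ‖u‖_{W^{θ,q}(O)}` for every bounded `ε`-Hölder
continuous `h` and every measurable `u` with finite `W^{θ,q}(O)`-norm. -/
theorem stmt_10
    (d : ℕ) (O : Set (EuclideanSpace ℝ (Fin d)))
    (hOo : IsOpen O) (hOb : Bornology.IsBounded O)
    (q θ ε : ℝ) (hq : 1 ≤ q) (hθ : θ ∈ Ioo (0 : ℝ) 1) (hε : ε ∈ Ioc θ 1) :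
    ∃ C : ℝ, 0 ≤ C ∧
      ∀ h u : EuclideanSpace ℝ (Fin d) → ℝ,
        -- `h` is bounded on `O`
        (∃ B : ℝ, ∀ ξ ∈ O, |h ξ| ≤ B) →
        -- `h` is `ε`-Hölder continuous on `O`
        (∃ H : ℝ, ∀ ξ ∈ O, ∀ η ∈ O, |h ξ - h η| ≤ H * ‖ξ - η‖ ^ ε) →
        -- `u` is measurable with `‖u‖_{W^{θ,q}(O)} < ∞`
        Measurable u →
        IntegrableOn (fun ξ => |u ξ| ^ q) O →
        IntegrableOn
          (fun p : EuclideanSpace ℝ (Fin d) × EuclideanSpace ℝ (Fin d) =>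
            |u p.1 - u p.2| ^ q / ‖p.1 - p.2‖ ^ ((d : ℝ) + θ * q)) (O ×ˢ O) →
        slobNorm d O q θ (fun ξ => u ξ * h ξ) ≤
          C * holderNorm d O ε h * slobNorm d O q θ u := by
  obtain ⟨hθ0, hθ1⟩ := hθ
  obtain ⟨hεθ, hε1⟩ := hε
  have hε0 : 0 < ε := hθ0.trans hεθ
  have hq0 : 0 < q := lt_of_lt_of_le one_pos hq
  have hqne : q ≠ 0 := hq0.ne'
  set α : ℝ := (ε - θ) * q with hαdef
  have hα : 0 < α := mul_pos (by linarith) hq0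
  obtain ⟨R₀, hR₀⟩ := hOb.subset_ball 0
  set R : ℝ := 2 * |R₀| + 1 with hRdef
  have hRpos : 0 < R := by positivity
  have hOball : ∀ η ∈ O, O ⊆ Metric.ball η R := by
    intro η hη ξ hξ
    have h1 := hR₀ hξ
    have h2 := hR₀ hη
    rw [Metric.mem_ball] at h1 h2 ⊢
    have h3 : dist ξ η ≤ dist ξ 0 + dist 0 η := dist_triangle _ _ _
    have h4 : dist 0 η = dist η 0 := dist_comm _ _
    have h5 : R₀ ≤ |R₀| := le_abs_self _
    rw [hRdef]
    rw [h4] at h3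
    linarith
  set K := ∫ x in Metric.ball (0 : EuclideanSpace ℝ (Fin d)) R, ‖x‖ ^ (α - (d:ℝ)) with hK
  have hK0 : 0 ≤ K :=
    setIntegral_nonneg measurableSet_ball
      (fun x _ => Real.rpow_nonneg (norm_nonneg _) _)
  set C0 : ℝ := 2 ^ q * (1 + K) + 1 with hC0
  have hC00 : 0 ≤ C0 := by positivity
  refine ⟨C0 ^ (1/q), Real.rpow_nonneg hC00 _, ?_⟩
  intro h u hBex hHex hu h1 h2
  obtain ⟨B, hB⟩ := hBex
  obtain ⟨H, hH⟩ := hHex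
  have hOmeas : MeasurableSet O := hOo.measurableSet
  set M := holderNorm d O ε h with hM
  -- nonnegativity and pointwise bounds by the Hölder norm
  have hS1nonneg : 0 ≤ sSup ((fun ξ => |h ξ|) '' O) := by
    apply Real.sSup_nonneg
    rintro y ⟨ξ, hξ, rfl⟩
    positivity
  have hS2nonneg : 0 ≤ sSup ((fun p : EuclideanSpace ℝ (Fin d) × EuclideanSpace ℝ (Fin d) =>
      |h p.1 - h p.2| / ‖p.1 - p.2‖ ^ ε) '' {p | p.1 ∈ O ∧ p.2 ∈ O ∧ p.1 ≠ p.2}) := by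
    apply Real.sSup_nonneg
    rintro y ⟨p, hp, rfl⟩
    positivity
  have hM0 : 0 ≤ M := by
    rw [hM, holderNorm]
    exact add_nonneg hS1nonneg hS2nonneg
  have hMb : ∀ ξ ∈ O, |h ξ| ≤ M := by
    intro ξ hξ
    have hb : |h ξ| ≤ sSup ((fun ξ => |h ξ|) '' O) := by
      apply le_csSup
      · refine ⟨B, ?_⟩
        rintro y ⟨ζ, hζ, rfl⟩
        exact hB ζ hζ
      · exact ⟨ξ, hξ, rfl⟩
    rw [hM, holderNorm]
    linarith
  have hMh : ∀ ξ ∈ O, ∀ η ∈ O, |h ξ - h η| ≤ M * ‖ξ - η‖ ^ ε := by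
    intro ξ hξ η hη
    rcases eq_or_ne ξ η with rfl | hne
    · simp [sub_self, Real.zero_rpow hε0.ne']
    · have hD : 0 < ‖ξ - η‖ := by rw [norm_pos_iff, sub_ne_zero]; exact hne
      have hDε : 0 < ‖ξ - η‖ ^ ε := Real.rpow_pos_of_pos hD ε
      have hbdd : BddAbove ((fun p : EuclideanSpace ℝ (Fin d) × EuclideanSpace ℝ (Fin d) =>
          |h p.1 - h p.2| / ‖p.1 - p.2‖ ^ ε) '' {p | p.1 ∈ O ∧ p.2 ∈ O ∧ p.1 ≠ p.2}) := by
        refine ⟨max H 0, ?_⟩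
        rintro y ⟨p, ⟨hp1, hp2, hpne⟩, rfl⟩
        have hDp : 0 < ‖p.1 - p.2‖ ^ ε :=
          Real.rpow_pos_of_pos (by rw [norm_pos_iff, sub_ne_zero]; exact hpne) ε
        rw [div_le_iff₀ hDp]
        calc |h p.1 - h p.2| ≤ H * ‖p.1 - p.2‖ ^ ε := hH _ hp1 _ hp2
          _ ≤ max H 0 * ‖p.1 - p.2‖ ^ ε :=
            mul_le_mul_of_nonneg_right (le_max_left _ _) hDp.le
      have hmem : |h ξ - h η| / ‖ξ - η‖ ^ ε ∈
          ((fun p : EuclideanSpace ℝ (Fin d) × EuclideanSpace ℝ (Fin d) =>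
            |h p.1 - h p.2| / ‖p.1 - p.2‖ ^ ε) '' {p | p.1 ∈ O ∧ p.2 ∈ O ∧ p.1 ≠ p.2}) :=
        ⟨(ξ, η), ⟨hξ, hη, hne⟩, rfl⟩
      have hle := le_csSup hbdd hmem
      rw [div_le_iff₀ hDε] at hle
      refine hle.trans ?_
      apply mul_le_mul_of_nonneg_right _ hDε.le
      rw [hM, holderNorm]
      linarith
  -- product integrability via Fubini
  set f : EuclideanSpace ℝ (Fin d) × EuclideanSpace ℝ (Fin d) → ℝ :=
    fun p => |u p.1 - u p.2| ^ q / ‖p.1 - p.2‖ ^ ((d:ℝ) + θ * q) with hf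
  have hf2 : Integrable f ((volume.restrict O).prod (volume.restrict O)) := by
    rw [Measure.prod_restrict, ← Measure.volume_eq_prod]
    exact h2
  have hfae : ∀ᵐ η ∂(volume.restrict O),
      Integrable (fun ξ => f (ξ, η)) (volume.restrict O) := hf2.prod_left_ae
  have hfint : Integrable (fun η => ∫ ξ, f (ξ, η) ∂(volume.restrict O))
      (volume.restrict O) := hf2.integral_prod_right
  -- L^q part
  have hMq : (0:ℝ) ≤ M ^ q := Real.rpow_nonneg hM0 _
  have hIuh : (∫ ξ in O, |u ξ * h ξ| ^ q) ≤ M ^ q * ∫ ξ in O, |u ξ| ^ q := by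
    rw [← integral_const_mul]
    apply integral_mono_of_nonneg
    · exact Filter.Eventually.of_forall fun ξ => Real.rpow_nonneg (abs_nonneg _) _
    · exact h1.const_mul _
    · filter_upwards [ae_restrict_mem hOmeas] with ξ hξ
      rw [abs_mul, Real.mul_rpow (abs_nonneg _) (abs_nonneg _), mul_comm (M ^ q)]
      exact mul_le_mul_of_nonneg_left
        (Real.rpow_le_rpow (abs_nonneg _) (hMb ξ hξ) hq0.le)
        (Real.rpow_nonneg (abs_nonneg _) _)
  -- pointwise bound for the seminorm part
  have hptwise : ∀ ξ ∈ O, ∀ η ∈ O,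
      |u ξ * h ξ - u η * h η| ^ q / ‖ξ - η‖ ^ ((d:ℝ) + θ * q) ≤
      2 ^ q * M ^ q * (f (ξ, η) + |u η| ^ q * ‖ξ - η‖ ^ (α - (d:ℝ))) := by
    intro ξ hξ η hη
    rcases eq_or_ne ξ η with rfl | hne
    · rw [sub_self, sub_self, norm_zero,
        Real.zero_rpow (by positivity : (d:ℝ) + θ * q ≠ 0), div_zero]
      have hfd : (0:ℝ) ≤ f (ξ, ξ) := by
        rw [hf]
        positivity
      positivity
    · have hD : 0 < ‖ξ - η‖ := by rw [norm_pos_iff, sub_ne_zero]; exact hne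
      have hDq : 0 < ‖ξ - η‖ ^ ((d:ℝ) + θ * q) := Real.rpow_pos_of_pos hD _
      rw [div_le_iff₀ hDq]
      have key : |u ξ * h ξ - u η * h η| ≤
          M * |u ξ - u η| + M * |u η| * ‖ξ - η‖ ^ ε := by
        have hrw : u ξ * h ξ - u η * h η = (u ξ - u η) * h ξ + u η * (h ξ - h η) := by
          ring
        rw [hrw]
        calc |(u ξ - u η) * h ξ + u η * (h ξ - h η)|
            ≤ |(u ξ - u η) * h ξ| + |u η * (h ξ - h η)| := abs_add_le _ _
          _ = |u ξ - u η| * |h ξ| + |u η| * |h ξ - h η| := by rw [abs_mul, abs_mul]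
          _ ≤ |u ξ - u η| * M + |u η| * (M * ‖ξ - η‖ ^ ε) :=
              add_le_add (mul_le_mul_of_nonneg_left (hMb ξ hξ) (abs_nonneg _))
                (mul_le_mul_of_nonneg_left (hMh ξ hξ η hη) (abs_nonneg _))
          _ = M * |u ξ - u η| + M * |u η| * ‖ξ - η‖ ^ ε := by ring
      have key2 : |u ξ * h ξ - u η * h η| ^ q ≤
          2 ^ q * ((M * |u ξ - u η|) ^ q + (M * |u η| * ‖ξ - η‖ ^ ε) ^ q) := by
        calc |u ξ * h ξ - u η * h η| ^ q
            ≤ (M * |u ξ - u η| + M * |u η| * ‖ξ - η‖ ^ ε) ^ q :=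
              Real.rpow_le_rpow (abs_nonneg _) key hq0.le
          _ ≤ _ := aux_two_rpow (by positivity) (by positivity) hq0.le
      refine key2.trans (le_of_eq ?_)
      -- both sides are equal
      have e0 : f (ξ, η) * ‖ξ - η‖ ^ ((d:ℝ) + θ * q) = |u ξ - u η| ^ q := by
        rw [hf]
        exact div_mul_cancel₀ _ hDq.ne'
      have e1 : ‖ξ - η‖ ^ (α - (d:ℝ)) * ‖ξ - η‖ ^ ((d:ℝ) + θ * q) = (‖ξ - η‖ ^ ε) ^ q := by
        rw [← Real.rpow_add hD, ← Real.rpow_mul (norm_nonneg _)]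
        congr 1
        rw [hαdef]; ring
      have e2 : (M * |u ξ - u η|) ^ q = M ^ q * |u ξ - u η| ^ q :=
        Real.mul_rpow hM0 (abs_nonneg _)
      have e3 : (M * |u η| * ‖ξ - η‖ ^ ε) ^ q = M ^ q * |u η| ^ q * (‖ξ - η‖ ^ ε) ^ q := by
        rw [Real.mul_rpow (by positivity) (Real.rpow_nonneg (norm_nonneg _) _),
          Real.mul_rpow hM0 (abs_nonneg _)]
      rw [e2, e3]
      calc 2 ^ q * (M ^ q * |u ξ - u η| ^ q + M ^ q * |u η| ^ q * (‖ξ - η‖ ^ ε) ^ q)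
          = 2 ^ q * M ^ q * (f (ξ, η) * ‖ξ - η‖ ^ ((d:ℝ) + θ * q) +
              |u η| ^ q * (‖ξ - η‖ ^ (α - (d:ℝ)) * ‖ξ - η‖ ^ ((d:ℝ) + θ * q))) := by
            rw [e0, e1]; ring
        _ = 2 ^ q * M ^ q * (f (ξ, η) + |u η| ^ q * ‖ξ - η‖ ^ (α - (d:ℝ))) *
              ‖ξ - η‖ ^ ((d:ℝ) + θ * q) := by ring
  -- integrability of the translated radial function on O
  have hshift_int : ∀ η ∈ O,
      IntegrableOn (fun ξ : EuclideanSpace ℝ (Fin d) => ‖ξ - η‖ ^ (α - (d:ℝ))) O :=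
    fun η hη => (aux_shift_int d hα R η).mono_set (hOball η hη)
  have hKη : ∀ η ∈ O, (∫ ξ in O, ‖ξ - η‖ ^ (α - (d:ℝ))) ≤ K := by
    intro η hη
    calc (∫ ξ in O, ‖ξ - η‖ ^ (α - (d:ℝ)))
        ≤ ∫ ξ in Metric.ball η R, ‖ξ - η‖ ^ (α - (d:ℝ)) := by
          apply setIntegral_mono_set (aux_shift_int d hα R η)
          · exact Filter.Eventually.of_forall fun ξ => Real.rpow_nonneg (norm_nonneg _) _
          · exact HasSubset.Subset.eventuallyLE (hOball η hη)
      _ = K := aux_shift_eq d _ R η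
  -- inner integral bound, a.e. in η
  have hinner : ∀ᵐ η ∂(volume.restrict O),
      (∫ ξ in O, |u ξ * h ξ - u η * h η| ^ q / ‖ξ - η‖ ^ ((d:ℝ) + θ * q)) ≤
      2 ^ q * M ^ q * ((∫ ξ in O, f (ξ, η)) + |u η| ^ q * K) := by
    filter_upwards [hfae, ae_restrict_mem hOmeas] with η hfη hη
    have hGint : Integrable
        (fun ξ => 2 ^ q * M ^ q * (f (ξ, η) + |u η| ^ q * ‖ξ - η‖ ^ (α - (d:ℝ))))
        (volume.restrict O) :=
      ((hfη.add ((hshift_int η hη).const_mul _)).const_mul _)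
    have step1 : (∫ ξ in O, |u ξ * h ξ - u η * h η| ^ q / ‖ξ - η‖ ^ ((d:ℝ) + θ * q)) ≤
        ∫ ξ in O, 2 ^ q * M ^ q * (f (ξ, η) + |u η| ^ q * ‖ξ - η‖ ^ (α - (d:ℝ))) := by
      apply integral_mono_of_nonneg
      · exact Filter.Eventually.of_forall fun ξ =>
          div_nonneg (Real.rpow_nonneg (abs_nonneg _) _) (Real.rpow_nonneg (norm_nonneg _) _)
      · exact hGint
      · filter_upwards [ae_restrict_mem hOmeas] with ξ hξ using hptwise ξ hξ η hη
    refine step1.trans ?_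
    rw [integral_const_mul, integral_add hfη ((hshift_int η hη).const_mul _),
      integral_const_mul]
    have h2qMq : (0:ℝ) ≤ 2 ^ q * M ^ q := by positivity
    apply mul_le_mul_of_nonneg_left _ h2qMq
    apply add_le_add_right
    exact mul_le_mul_of_nonneg_left (hKη η hη) (Real.rpow_nonneg (abs_nonneg _) _)
  -- outer integral bound
  have hJuh : (∫ η in O, ∫ ξ in O,
        |u ξ * h ξ - u η * h η| ^ q / ‖ξ - η‖ ^ ((d:ℝ) + θ * q)) ≤
      2 ^ q * M ^ q * ((∫ η in O, ∫ ξ in O, f (ξ, η)) + K * ∫ η in O, |u η| ^ q) := by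
    have hg : Integrable
        (fun η => 2 ^ q * M ^ q * ((∫ ξ in O, f (ξ, η)) + |u η| ^ q * K))
        (volume.restrict O) :=
      ((hfint.add (h1.mul_const K)).const_mul _)
    calc (∫ η in O, ∫ ξ in O,
          |u ξ * h ξ - u η * h η| ^ q / ‖ξ - η‖ ^ ((d:ℝ) + θ * q))
        ≤ ∫ η in O, 2 ^ q * M ^ q * ((∫ ξ in O, f (ξ, η)) + |u η| ^ q * K) := by
          apply integral_mono_of_nonneg
          · exact Filter.Eventually.of_forall fun η => integral_nonneg fun ξ =>
              div_nonneg (Real.rpow_nonneg (abs_nonneg _) _)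
                (Real.rpow_nonneg (norm_nonneg _) _)
          · exact hg
          · exact hinner
      _ = 2 ^ q * M ^ q * ((∫ η in O, ∫ ξ in O, f (ξ, η)) + K * ∫ η in O, |u η| ^ q) := by
          rw [integral_const_mul, integral_add hfint (h1.mul_const K),
            integral_mul_const]
          ring
  -- combine everything
  have hIu : 0 ≤ ∫ ξ in O, |u ξ| ^ q :=
    integral_nonneg fun _ => Real.rpow_nonneg (abs_nonneg _) _
  have hJu : 0 ≤ ∫ η in O, ∫ ξ in O, f (ξ, η) :=
    integral_nonneg fun η => integral_nonneg fun ξ => by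
      rw [hf]
      positivity
  have hIuh0 : 0 ≤ ∫ ξ in O, |u ξ * h ξ| ^ q :=
    integral_nonneg fun _ => Real.rpow_nonneg (abs_nonneg _) _
  have hJuh0 : 0 ≤ ∫ η in O, ∫ ξ in O,
      |u ξ * h ξ - u η * h η| ^ q / ‖ξ - η‖ ^ ((d:ℝ) + θ * q) :=
    integral_nonneg fun η => integral_nonneg fun ξ =>
      div_nonneg (Real.rpow_nonneg (abs_nonneg _) _) (Real.rpow_nonneg (norm_nonneg _) _)
  have h2q : (0:ℝ) ≤ 2 ^ q := by positivity
  have htotal : (∫ ξ in O, |u ξ * h ξ| ^ q) + (∫ η in O, ∫ ξ in O,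
        |u ξ * h ξ - u η * h η| ^ q / ‖ξ - η‖ ^ ((d:ℝ) + θ * q)) ≤
      C0 * (M ^ q * ((∫ ξ in O, |u ξ| ^ q) + ∫ η in O, ∫ ξ in O, f (ξ, η))) := by
    rw [hC0]
    nlinarith [hIuh, hJuh, mul_nonneg (mul_nonneg h2q hMq) hIu,
      mul_nonneg (mul_nonneg (mul_nonneg h2q hMq) hK0) hJu,
      mul_nonneg hMq hJu, mul_nonneg hMq hIu,
      mul_nonneg (mul_nonneg h2q hMq) hJu]
  have hSu0 : 0 ≤ (∫ ξ in O, |u ξ| ^ q) + ∫ η in O, ∫ ξ in O, f (ξ, η) :=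
    add_nonneg hIu hJu
  -- final computation with rpow
  have hfinal : ((∫ ξ in O, |u ξ * h ξ| ^ q) + (∫ η in O, ∫ ξ in O,
        |u ξ * h ξ - u η * h η| ^ q / ‖ξ - η‖ ^ ((d:ℝ) + θ * q))) ^ (1/q) ≤
      C0 ^ (1/q) * M *
        (((∫ ξ in O, |u ξ| ^ q) + ∫ η in O, ∫ ξ in O, f (ξ, η)) ^ (1/q)) := by
    have step := Real.rpow_le_rpow (add_nonneg hIuh0 hJuh0) htotal
      (by positivity : (0:ℝ) ≤ 1/q)
    refine step.trans (le_of_eq ?_)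
    rw [Real.mul_rpow hC00 (mul_nonneg hMq hSu0), Real.mul_rpow hMq hSu0,
      ← Real.rpow_mul hM0, mul_one_div_cancel hqne, Real.rpow_one]
    ring
  have hgoal1 : slobNorm d O q θ (fun ξ => u ξ * h ξ) =
      ((∫ ξ in O, |u ξ * h ξ| ^ q) + ∫ η in O, ∫ ξ in O,
        |u ξ * h ξ - u η * h η| ^ q / ‖ξ - η‖ ^ ((d:ℝ) + θ * q)) ^ (1/q) := by
    simp only [slobNorm]
  have hgoal2 : slobNorm d O q θ u =
      ((∫ ξ in O, |u ξ| ^ q) + ∫ η in O, ∫ ξ in O, f (ξ, η)) ^ (1/q) := by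
    simp only [slobNorm, hf]
  rw [hgoal1, hgoal2]
  exact hfinal
end
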